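/- arXiv:1411.4684 — 6 statements merged into one kernel-verified Lean document; each statement's English description precedes it below -/
import Mathlib

section
/- With N_n as above, the limit lim_{n→∞} (log_2 N_n)/n exists and equals (1/(2 log 2)) · Σ_{j=1}^∞ (log F_j)/2^j, where F_0 = 1, F_1 = 2, F_{j+2} = F_{j+1} + F_j. -/
set_option maxHeartbeats 1000000

open Filter


/-- no-consecutive-ones predicate -/
def NC (L : ℕ) (y : Fin L → Fin 2) : Prop :=
  ∀ i : ℕ, ∀ h : i + 1 < L, ¬(y ⟨i, Nat.lt_of_succ_lt h⟩ = 1 ∧ y ⟨i + 1, h⟩ = 1)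

lemma snoc_lt {α : Type*} {L : ℕ} (z : Fin L → α) (b : α) (i : ℕ) (h : i < L)
    (h' : i < L + 1) : (Fin.snoc z b : Fin (L+1) → α) ⟨i, h'⟩ = z ⟨i, h⟩ := by
  have : (⟨i, h'⟩ : Fin (L + 1)) = Fin.castSucc ⟨i, h⟩ := rfl
  rw [this, Fin.snoc_castSucc]

lemma snoc_last' {α : Type*} {L : ℕ} (z : Fin L → α) (b : α)
    (h' : L < L + 1) : (Fin.snoc z b : Fin (L+1) → α) ⟨L, h'⟩ = b := by
  have : (⟨L, h'⟩ : Fin (L + 1)) = Fin.last L := rfl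
  rw [this, Fin.snoc_last]

lemma card_NC : ∀ L, Nat.card {y : Fin L → Fin 2 // NC L y} = Nat.fib (L + 2) := by
  have base : ∀ L, L ≤ 1 → Nat.card {y : Fin L → Fin 2 // NC L y} = 2 ^ L := by
    intro L hL
    rw [Nat.card_congr (Equiv.subtypeUnivEquiv (fun y => by intro i h; omega))]
    simp [Nat.card_eq_fintype_card]
  intro L
  induction L using Nat.twoStepInduction with
  | zero => rw [base 0 (by norm_num)]; decide
  | one => rw [base 1 (by norm_num)]; decide
  | more L ih1 ih2 =>
    have key : Nat.card {y : Fin (L + 2) → Fin 2 // NC (L + 2) y} =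
        Nat.card {y : Fin (L + 1) → Fin 2 // NC (L + 1) y} +
        Nat.card {y : Fin L → Fin 2 // NC L y} := by
      rw [← Nat.card_sum]
      apply Nat.card_congr
      apply (Equiv.ofBijective
        (fun p => match p with
          | Sum.inl ⟨z, hz⟩ => (⟨Fin.snoc z 0, by
              intro i h
              rcases lt_or_ge (i + 1) (L + 1) with h1 | h1
              · rw [snoc_lt z 0 i (by omega), snoc_lt z 0 (i+1) h1]
                exact hz i h1
              · have : i + 1 = L + 1 := by omega
                rw [show (⟨i+1, h⟩ : Fin (L+2)) = ⟨L+1, by omega⟩ from by simp [this],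
                  snoc_last']
                rintro ⟨-, h2⟩; exact absurd h2 (by decide)⟩ :
              {y : Fin (L + 2) → Fin 2 // NC (L + 2) y})
          | Sum.inr ⟨w, hw⟩ => ⟨Fin.snoc (Fin.snoc w 0) 1, by
              intro i h
              rcases lt_or_ge (i + 1) L with h1 | h1
              · rw [snoc_lt _ 1 i (by omega), snoc_lt _ 1 (i+1) (by omega),
                  snoc_lt w 0 i (by omega), snoc_lt w 0 (i+1) h1]
                exact hw i h1
              · rcases eq_or_lt_of_le h1 with h2 | h2
                · rw [show (⟨i+1, h⟩ : Fin (L+2)) = ⟨L, by omega⟩ from by simp [← h2],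
                    snoc_lt _ 1 L (by omega), snoc_last']
                  rintro ⟨-, hc⟩; exact absurd hc (by decide)
                · have : i = L := by omega
                  rw [show (⟨i, Nat.lt_of_succ_lt h⟩ : Fin (L+2)) = ⟨L, by omega⟩ from by
                      simp [this],
                    snoc_lt _ 1 L (by omega), snoc_last']
                  rintro ⟨hc, -⟩; exact absurd hc (by decide)⟩)
        ?_).symm
      constructor
      · rintro (⟨z, hz⟩ | ⟨w, hw⟩) (⟨z', hz'⟩ | ⟨w', hw'⟩) he <;>
          simp only [Subtype.mk.injEq] at he
        · have : z = z' := by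
            funext i
            have := congrFun (Subtype.mk.inj he) ⟨i.1, by omega⟩
            rw [snoc_lt z 0 i.1 i.2, snoc_lt z' 0 i.1 i.2] at this
            exact this
          simp [this]
        · have := congrFun (Subtype.mk.inj he) ⟨L + 1, by omega⟩
          rw [snoc_last', snoc_last'] at this
          exact absurd this (by decide)
        · have := congrFun (Subtype.mk.inj he) ⟨L + 1, by omega⟩
          rw [snoc_last', snoc_last'] at this
          exact absurd this (by decide)
        · have : w = w' := by
            funext i
            have := congrFun (Subtype.mk.inj he) ⟨i.1, by omega⟩
            rw [snoc_lt (Fin.snoc w 0) 1 i.1 (by omega),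
              snoc_lt (Fin.snoc w' 0) 1 i.1 (by omega),
              snoc_lt w 0 i.1 i.2, snoc_lt w' 0 i.1 i.2] at this
            exact this
          simp [this]
      · rintro ⟨y, hy⟩
        rcases Fin.exists_fin_two.mp ⟨y ⟨L + 1, by omega⟩, rfl⟩ with hb | hb
        · -- last bit is 0
          refine ⟨Sum.inl ⟨fun i => y ⟨i.1, by omega⟩, ?_⟩, ?_⟩
          · intro i h
            exact hy i (by omega)
          · apply Subtype.ext
            show (Fin.snoc (fun i : Fin (L+1) => y ⟨i.1, by omega⟩) 0 : Fin (L+2) → Fin 2) = y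
            funext i
            rcases i with ⟨iv, hiv⟩
            rcases lt_or_ge iv (L + 1) with h1 | h1
            · rw [snoc_lt _ 0 iv h1]
            · have hiv' : iv = L + 1 := by omega
              subst hiv'
              rw [snoc_last']; exact hb.symm
        · -- last bit is 1, so bit L is 0
          have hL0 : y ⟨L, by omega⟩ = 0 := by
            have := hy L (by omega)
            rw [hb] at this
            rcases Fin.exists_fin_two.mp ⟨y ⟨L, by omega⟩, rfl⟩ with h0 | h0
            · exact h0
            · exact absurd ⟨h0, rfl⟩ this
          refine ⟨Sum.inr ⟨fun i => y ⟨i.1, by omega⟩, ?_⟩, ?_⟩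
          · intro i h
            exact hy i (by omega)
          · apply Subtype.ext
            show (Fin.snoc (Fin.snoc (fun i : Fin L => y ⟨i.1, by omega⟩) 0) 1 :
                Fin (L+2) → Fin 2) = y
            funext i
            rcases i with ⟨iv, hiv⟩
            rcases lt_or_ge iv L with h1 | h1
            · rw [snoc_lt _ 1 iv (by omega), snoc_lt _ 0 iv h1]
            · rcases eq_or_lt_of_le h1 with h2 | h2
              · have hiv' : iv = L := by omega
                subst hiv'
                rw [snoc_lt _ 1 iv (by omega), snoc_last']
                exact hL0.symm
              · have hiv' : iv = L + 1 := by omega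
                subst hiv'
                rw [snoc_last']
                exact hb.symm
    rw [key, ih1, ih2]
    conv_rhs => rw [Nat.fib_add_two]
    have : L + 1 + 2 = L + 2 + 1 := by omega
    rw [this, Nat.add_comm]

lemma NC_def (L : ℕ) (y : Fin L → Fin 2) : NC L y ↔
    ∀ i : ℕ, ∀ h : i + 1 < L, ¬(y ⟨i, Nat.lt_of_succ_lt h⟩ = 1 ∧ y ⟨i + 1, h⟩ = 1) :=
  Iff.rfl

def oddF (n : ℕ) : Finset ℕ := (Finset.range (n + 1)).filter Odd

def lf (n m : ℕ) : ℕ := Nat.log 2 (n / m) + 1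

lemma mem_oddF {n m : ℕ} : m ∈ oddF n ↔ m ≤ n ∧ Odd m := by
  simp [oddF, Nat.lt_succ_iff, and_comm]

-- facts about decomposition
lemma decomp_le {n : ℕ} (m i : ℕ) (hm1 : 1 ≤ m) (hmn : m ≤ n) (hi : i < lf n m) :
    1 ≤ 2 ^ i * m ∧ 2 ^ i * m ≤ n := by
  constructor
  · have := Nat.one_le_two_pow (n := i); nlinarith
  · have h1 : 2 ^ i ≤ 2 ^ Nat.log 2 (n / m) :=
      Nat.pow_le_pow_right (by norm_num) (by unfold lf at hi; omega)
    have h2 : 2 ^ Nat.log 2 (n / m) ≤ n / m :=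
      Nat.pow_log_le_self 2 (Nat.div_pos hmn hm1).ne'
    calc 2 ^ i * m ≤ (n / m) * m := by
          exact Nat.mul_le_mul_right m (le_trans h1 h2)
      _ ≤ n := Nat.div_mul_le_self n m
  
lemma decomp_lt_lf {n : ℕ} (m i : ℕ) (hm1 : 1 ≤ m) (h : 2 ^ i * m ≤ n) : i < lf n m := by
  have hmn : m ≤ n := le_trans (by nlinarith [Nat.one_le_two_pow (n := i)]) h
  have h2 : 2 ^ i ≤ n / m := (Nat.le_div_iff_mul_le hm1).mpr h
  have := (Nat.le_log_iff_pow_le (by norm_num) (by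
    have : 1 ≤ n / m := Nat.one_le_div_iff hm1 |>.mpr hmn
    omega)).mpr h2
  unfold lf; omega

lemma odd_ordCompl {v : ℕ} (hv : v ≠ 0) : Odd (ordCompl[2] v) := by
  rw [Nat.odd_iff]
  have := Nat.not_dvd_ordCompl Nat.prime_two hv
  omega

lemma fact2_pow_mul {m i : ℕ} (hm : Odd m) : (2 ^ i * m).factorization 2 = i := by
  have hm0 : m ≠ 0 := by rintro rfl; simp at hm
  rw [Nat.factorization_mul (by positivity) hm0]
  have h1 : (2 ^ i : ℕ).factorization 2 = i := by
    rw [Nat.Prime.factorization_pow Nat.prime_two]; simp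
  have h2 : m.factorization 2 = 0 := by
    apply Nat.factorization_eq_zero_of_not_dvd
    rw [Nat.odd_iff] at hm; omega
  simp [h1, h2, Nat.Prime.factorization Nat.prime_two]

lemma ordCompl_pow_mul {m i : ℕ} (hm : Odd m) : ordCompl[2] (2 ^ i * m) = m := by
  rw [fact2_pow_mul hm, Nat.mul_div_cancel_left _ (by positivity)]

noncomputable def chainFun (n : ℕ) :
    (Σ m : {m : ℕ // m ∈ oddF n}, Fin (lf n m.1)) → Fin n :=
  fun p => ⟨2 ^ p.2.1 * p.1.1 - 1, by
    obtain ⟨⟨m, hm⟩, ⟨i, hi⟩⟩ := p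
    obtain ⟨hmn, hmo⟩ := mem_oddF.mp hm
    have hm1 : 1 ≤ m := hmo.pos
    obtain ⟨h1, h2⟩ := decomp_le m i hm1 hmn hi
    simp only
    omega⟩

lemma chainFun_bijective (n : ℕ) : Function.Bijective (chainFun n) := by
  constructor
  · rintro ⟨⟨m, hm⟩, ⟨i, hi⟩⟩ ⟨⟨m', hm'⟩, ⟨i', hi'⟩⟩ h
    obtain ⟨hmn, hmo⟩ := mem_oddF.mp hm
    obtain ⟨hmn', hmo'⟩ := mem_oddF.mp hm'
    have hm1 : 1 ≤ m := hmo.pos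
    have hm1' : 1 ≤ m' := hmo'.pos
    obtain ⟨ha, -⟩ := decomp_le m i hm1 hmn hi
    obtain ⟨ha', -⟩ := decomp_le m' i' hm1' hmn' hi'
    have hv : 2 ^ i * m = 2 ^ i' * m' := by
      have hval : (2:ℕ) ^ i * m - 1 = 2 ^ i' * m' - 1 := congrArg Fin.val h
      omega
    have hii : i = i' := by
      have := fact2_pow_mul (i := i) hmo
      rw [hv, fact2_pow_mul hmo'] at this
      exact this.symm
    subst hii
    have hmm : m = m' := by
      have h2 : (0:ℕ) < 2 ^ i := by positivity
      exact Nat.eq_of_mul_eq_mul_left h2 hv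
    subst hmm
    rfl
  · rintro ⟨k, hk⟩
    set v := k + 1 with hv
    have hv0 : v ≠ 0 := by omega
    have hvn : v ≤ n := by omega
    set i := v.factorization 2 with hi
    set m := ordCompl[2] v with hm
    have hmo : Odd m := odd_ordCompl hv0
    have hprod : 2 ^ i * m = v := Nat.ordProj_mul_ordCompl_eq_self v 2
    have hm1 : 1 ≤ m := hmo.pos
    have hmn : m ≤ n := le_trans (Nat.ordCompl_le v 2) hvn
    have hil : i < lf n m := decomp_lt_lf m i hm1 (by omega)
    refine ⟨⟨⟨m, mem_oddF.mpr ⟨hmn, hmo⟩⟩, ⟨i, hil⟩⟩, ?_⟩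
    simp only [chainFun]
    apply Fin.ext
    simp only
    omega

-- test compile

noncomputable def chainEquiv (n : ℕ) :
    (Σ m : {m : ℕ // m ∈ oddF n}, Fin (lf n m.1)) ≃ Fin n :=
  Equiv.ofBijective _ (chainFun_bijective n)

noncomputable def wordsEquiv (n : ℕ) :
    (Fin n → Fin 2) ≃ ((m : {m : ℕ // m ∈ oddF n}) → (Fin (lf n m.1) → Fin 2)) :=
  ((Equiv.arrowCongr (chainEquiv n) (Equiv.refl (Fin 2))).symm).trans
    (Equiv.piCurry fun _ _ => Fin 2)

lemma wordsEquiv_apply (n : ℕ) (x : Fin n → Fin 2) (m : {m : ℕ // m ∈ oddF n})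
    (i : Fin (lf n m.1)) : wordsEquiv n x m i = x (chainFun n ⟨m, i⟩) := rfl

def P (n : ℕ) (x : Fin n → Fin 2) : Prop :=
  ∀ k : ℕ, ∀ _h1 : 1 ≤ k, ∀ _h2 : 2 * k ≤ n,
    ¬(x ⟨k - 1, by omega⟩ = 1 ∧ x ⟨2 * k - 1, by omega⟩ = 1)

lemma P_iff (n : ℕ) (x : Fin n → Fin 2) :
    P n x ↔ ∀ m : {m : ℕ // m ∈ oddF n}, NC (lf n m.1) (wordsEquiv n x m) := by
  constructor
  · rintro hP ⟨m, hm⟩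
    rw [NC_def]
    intro i hi
    obtain ⟨hmn, hmo⟩ := mem_oddF.mp hm
    have hm1 : 1 ≤ m := hmo.pos
    obtain ⟨h1, h2⟩ := decomp_le m (i+1) hm1 hmn hi
    have hpow : 2 ^ (i + 1) * m = 2 * (2 ^ i * m) := by ring
    have key := hP (2 ^ i * m) (by nlinarith [Nat.one_le_two_pow (n := i)]) (by omega)
    rw [wordsEquiv_apply, wordsEquiv_apply]
    simp only [chainFun]
    intro ⟨c1, c2⟩
    apply key
    constructor
    · convert c1 using 3
    · convert c2 using 3
      omega
  · intro hC k hk1 hk2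
    set v := k with hvk
    have hv0 : v ≠ 0 := by omega
    set i := v.factorization 2 with hidef
    set m := ordCompl[2] v with hmdef
    have hmo : Odd m := odd_ordCompl hv0
    have hprod : 2 ^ i * m = v := Nat.ordProj_mul_ordCompl_eq_self v 2
    have hm1 : 1 ≤ m := hmo.pos
    have hmn : m ≤ n := le_trans (le_trans (Nat.ordCompl_le v 2) (by omega)) hk2
    have hpow : 2 ^ (i + 1) * m = 2 * (2 ^ i * m) := by ring
    have hil : i + 1 < lf n m := by
      have h2n : 2 ^ (i + 1) * m ≤ n := by omega
      exact decomp_lt_lf m (i+1) hm1 h2n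
    have key := (NC_def _ _).mp (hC ⟨m, mem_oddF.mpr ⟨hmn, hmo⟩⟩) i hil
    rw [wordsEquiv_apply, wordsEquiv_apply] at key
    simp only [chainFun] at key
    intro ⟨c1, c2⟩
    apply key
    constructor
    · convert c1 using 3
      omega
    · convert c2 using 3
      omega

lemma card_words (n : ℕ) :
    Nat.card {x : Fin n → Fin 2 // P n x} = ∏ m ∈ oddF n, Nat.fib (lf n m + 2) := by
  rw [Nat.card_congr ((Equiv.subtypeEquiv (wordsEquiv n) (P_iff n)).trans
    Equiv.subtypePiEquivPi)]
  rw [Nat.card_pi]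
  rw [← Finset.prod_coe_sort (oddF n) (fun m => Nat.fib (lf n m + 2))]
  exact Finset.prod_congr rfl fun m _ => card_NC _


def cnt (n j : ℕ) : ℕ := ((oddF n).filter (fun m => lf n m = j)).card

lemma oddIcc_card (a : ℕ) : ∀ b, ((Finset.Icc (a + 1) b).filter Odd).card
    = (b + 1) / 2 - (a + 1) / 2 := by
  intro b
  induction b with
  | zero =>
    rw [Finset.Icc_eq_empty (by omega)]
    simp
  | succ b ih =>
    by_cases h : a + 1 ≤ b + 1
    · rw [← Finset.insert_Icc_right_eq_Icc_add_one h, Finset.filter_insert]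
      by_cases hodd : Odd (b + 1)
      · rw [if_pos hodd, Finset.card_insert_of_notMem (by simp), ih]
        rw [Nat.odd_iff] at hodd
        omega
      · rw [if_neg hodd, ih]
        rw [Nat.odd_iff] at hodd
        omega
    · rw [Finset.Icc_eq_empty (by omega)]
      simp
      omega

lemma cnt_filter_eq (n j : ℕ) (hj : 1 ≤ j) (hn : 1 ≤ n) :
    (oddF n).filter (fun m => lf n m = j)
      = (Finset.Icc (n / 2 ^ j + 1) (n / 2 ^ (j-1))).filter Odd := by
  have hpj : (0:ℕ) < 2 ^ j := Nat.pow_pos (by norm_num)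
  have hpj1 : (0:ℕ) < 2 ^ (j-1) := Nat.pow_pos (by norm_num)
  ext m
  simp only [Finset.mem_filter, mem_oddF, Finset.mem_Icc]
  constructor
  · rintro ⟨⟨hmn, hmo⟩, hl⟩
    have hm1 : 1 ≤ m := hmo.pos
    have hlog : Nat.log 2 (n / m) = j - 1 := by unfold lf at hl; omega
    have hnm : n / m ≠ 0 := (Nat.div_pos hmn hm1).ne'
    have h1 : 2 ^ (j-1) ≤ n / m := hlog ▸ Nat.pow_log_le_self 2 hnm
    have h2 : n / m < 2 ^ j := by
      have h := Nat.lt_pow_succ_log_self (b := 2) (by norm_num) (n / m)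
      rw [hlog, Nat.succ_eq_add_one] at h
      have hje : j - 1 + 1 = j := by omega
      rwa [hje] at h
    have hx1 : 2 ^ (j-1) * m ≤ n := (Nat.le_div_iff_mul_le hm1).mp h1
    have hx2 : n < 2 ^ j * m := (Nat.div_lt_iff_lt_mul hm1).mp h2
    refine ⟨⟨?_, ?_⟩, hmo⟩
    · have : n / 2 ^ j < m := (Nat.div_lt_iff_lt_mul hpj).mpr
        (by rwa [Nat.mul_comm m (2 ^ j)])
      omega
    · exact (Nat.le_div_iff_mul_le hpj1).mpr (by rwa [Nat.mul_comm m (2 ^ (j-1))])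
  · rintro ⟨⟨hlo, hhi⟩, hmo⟩
    have hm1 : 1 ≤ m := hmo.pos
    have hmn : m ≤ n := le_trans hhi (Nat.div_le_self _ _)
    refine ⟨⟨hmn, hmo⟩, ?_⟩
    have hy1 : m * 2 ^ (j-1) ≤ n := (Nat.le_div_iff_mul_le hpj1).mp hhi
    have hy2 : n < m * 2 ^ j := (Nat.div_lt_iff_lt_mul hpj).mp (by omega)
    have h1 : 2 ^ (j-1) ≤ n / m := (Nat.le_div_iff_mul_le hm1).mpr
      (by rwa [Nat.mul_comm (2 ^ (j-1)) m])
    have h2 : n / m < 2 ^ j := (Nat.div_lt_iff_lt_mul hm1).mpr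
      (by rwa [Nat.mul_comm (2 ^ j) m])
    have hnm : n / m ≠ 0 := by
      have : (1:ℕ) ≤ n / m := h1.trans' (Nat.one_le_two_pow)
      omega
    have hge : j - 1 ≤ Nat.log 2 (n / m) :=
      (Nat.le_log_iff_pow_le (by norm_num) hnm).mpr h1
    have hlt : Nat.log 2 (n / m) < j := Nat.log_lt_of_lt_pow hnm h2
    unfold lf
    omega

lemma cnt_eq (n s : ℕ) (hn : 1 ≤ n) :
    cnt n (s + 1) = (n / 2 ^ s + 1) / 2 - (n / 2 ^ (s+1) + 1) / 2 := by
  unfold cnt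
  rw [cnt_filter_eq n (s+1) (by omega) hn, oddIcc_card]
  simp

lemma cnt_bound (n s : ℕ) (hn : 1 ≤ n) :
    |(cnt n (s + 1) : ℝ) - n / 2 ^ (s + 2)| ≤ 2 := by
  have hcnt := cnt_eq n s hn
  set A := n / 2 ^ s with hA
  set B := n / 2 ^ (s+1) with hB
  set p := (A + 1) / 2 with hp
  set q := (B + 1) / 2 with hq
  have hBA : B ≤ A := Nat.div_le_div_left
    (Nat.pow_le_pow_right (by norm_num) (by omega)) (Nat.pow_pos (by norm_num))
  have hqp : q ≤ p := by omega
  have hcast : (cnt n (s+1) : ℝ) = (p : ℝ) - q := by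
    rw [hcnt, Nat.cast_sub hqp]
  have hA1 : 2 ^ s * A + n % 2 ^ s = n := Nat.div_add_mod n (2^s)
  have hA2 : n % 2 ^ s < 2 ^ s := Nat.mod_lt n (Nat.pow_pos (by norm_num))
  have hB1 : 2 ^ (s+1) * B + n % 2 ^ (s+1) = n := Nat.div_add_mod n (2^(s+1))
  have hB2 : n % 2 ^ (s+1) < 2 ^ (s+1) := Nat.mod_lt n (Nat.pow_pos (by norm_num))
  have hp1 : 2 * p ≤ A + 1 := by omega
  have hp2 : A ≤ 2 * p := by omega
  have hq1 : 2 * q ≤ B + 1 := by omega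
  have hq2 : B ≤ 2 * q := by omega
  set t : ℝ := (2:ℝ) ^ s with ht
  have ht0 : (0:ℝ) < t := by positivity
  have h2s2 : (2:ℝ) ^ (s + 2) = 4 * t := by rw [ht]; ring
  -- real versions
  have f1 : t * (A:ℝ) ≤ n := by
    have : ((2 ^ s * A : ℕ) : ℝ) ≤ n := by exact_mod_cast le_of_add_le_left hA1.le
    push_cast at this; linarith
  have f2 : (n:ℝ) < t * A + t := by
    have : (n:ℕ) < 2 ^ s * A + 2 ^ s := by omega
    have h := this
    have : ((n:ℕ):ℝ) < ((2 ^ s * A + 2 ^ s : ℕ):ℝ) := by exact_mod_cast h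
    push_cast at this; linarith
  have f3 : 2 * t * (B:ℝ) ≤ n := by
    have h : (2 ^ (s+1) * B : ℕ) ≤ n := by omega
    have : ((2 ^ (s+1) * B : ℕ):ℝ) ≤ n := by exact_mod_cast h
    push_cast [pow_succ] at this; linarith
  have f4 : (n:ℝ) < 2 * t * B + 2 * t := by
    have h : (n:ℕ) < 2 ^ (s+1) * B + 2 ^ (s+1) := by omega
    have : ((n:ℕ):ℝ) < ((2 ^ (s+1) * B + 2 ^ (s+1) : ℕ):ℝ) := by exact_mod_cast h
    push_cast [pow_succ] at this; linarith
  have f5 : 2 * (p:ℝ) ≤ A + 1 := by exact_mod_cast hp1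
  have f6 : (A:ℝ) ≤ 2 * p := by exact_mod_cast hp2
  have f7 : 2 * (q:ℝ) ≤ B + 1 := by exact_mod_cast hq1
  have f8 : (B:ℝ) ≤ 2 * q := by exact_mod_cast hq2
  -- products
  have g1 : t * (2 * (p:ℝ)) ≤ t * (A + 1) := mul_le_mul_of_nonneg_left f5 ht0.le
  have g2 : t * (A:ℝ) ≤ t * (2 * p) := mul_le_mul_of_nonneg_left f6 ht0.le
  have g3 : t * (2 * (q:ℝ)) ≤ t * (B + 1) := mul_le_mul_of_nonneg_left f7 ht0.le
  have g4 : t * (B:ℝ) ≤ t * (2 * q) := mul_le_mul_of_nonneg_left f8 ht0.le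
  have ht4 : (0:ℝ) < 4 * t := by linarith
  have Dhigh : (n:ℝ)/(4*t) ≤ (p:ℝ) - q + 2 := by
    rw [div_le_iff₀ ht4]
    nlinarith [g1, g2, g3, g4, f1, f2, f3, f4, ht0]
  have Dlow : (p:ℝ) - q - 2 ≤ (n:ℝ)/(4*t) := by
    rw [le_div_iff₀ ht4]
    nlinarith [g1, g2, g3, g4, f1, f2, f3, f4, ht0]
  rw [hcast, h2s2, abs_le]
  constructor <;> linarith

noncomputable def gg (j : ℕ) : ℝ := Real.logb 2 (Nat.fib (j + 2))
noncomputable def uu (j : ℕ) : ℝ := gg j / 2 ^ (j + 1)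

lemma fib_pos' (j : ℕ) : (1:ℕ) ≤ Nat.fib (j + 2) := Nat.fib_pos.mpr (by omega)

lemma gg_nonneg (j : ℕ) : 0 ≤ gg j :=
  Real.logb_nonneg (by norm_num) (by exact_mod_cast fib_pos' j)

lemma fib_le_pow : ∀ j, Nat.fib (j + 2) ≤ 2 ^ j := by
  intro j
  induction j using Nat.twoStepInduction with
  | zero => decide
  | one => decide
  | more j ih1 ih2 =>
    have : Nat.fib (j + 2 + 2) = Nat.fib (j + 1 + 2) + Nat.fib (j + 2) := by
      conv_lhs => rw [show j + 2 + 2 = (j + 2) + 2 from rfl, Nat.fib_add_two]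
      have : j + 2 + 1 = j + 1 + 2 := by omega
      rw [this]
      omega
    rw [this]
    have h2 : (2:ℕ) ^ (j + 2) = 2 ^ (j+1) + 2 ^ (j+1) := by ring
    have h3 : (2:ℕ) ^ j ≤ 2 ^ (j+1) := Nat.pow_le_pow_right (by norm_num) (by omega)
    omega

lemma gg_le (j : ℕ) : gg j ≤ j := by
  have h1 : (Nat.fib (j + 2) : ℝ) ≤ (2:ℝ) ^ j := by exact_mod_cast fib_le_pow j
  have h2 : gg j ≤ Real.logb 2 ((2:ℝ) ^ j) :=
    Real.logb_le_logb_of_le (by norm_num) (by exact_mod_cast fib_pos' j) h1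
  calc gg j ≤ Real.logb 2 ((2:ℝ) ^ j) := h2
    _ = j := by
        rw [Real.logb_pow, Real.logb_self_eq_one (by norm_num), mul_one]

lemma uu_nonneg (j : ℕ) : 0 ≤ uu j := by
  exact div_nonneg (gg_nonneg j) (by positivity)

lemma uu_summable : Summable uu := by
  apply Summable.of_nonneg_of_le (f := fun j : ℕ => (j:ℝ) * (1/2)^j) uu_nonneg
  · intro j
    unfold uu
    have h0 : ((j:ℝ)) * (1/2)^j = j / 2^j := by
      rw [one_div, inv_pow, mul_comm, inv_mul_eq_div]
    rw [h0]
    apply div_le_div₀ (Nat.cast_nonneg j) (gg_le j) (by positivity)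
    exact pow_le_pow_right₀ (by norm_num) (by omega)
  · simpa using summable_pow_mul_geometric_of_norm_lt_one 1 (r := (1/2:ℝ)) (by norm_num)

noncomputable def SS : ℝ := ∑' j, uu j
def Jn (n : ℕ) : ℕ := Nat.log 2 n + 1
noncomputable def WW (n : ℕ) : ℝ := ∑ m ∈ oddF n, gg (lf n m)
noncomputable def tailT (J : ℕ) : ℝ := ∑' i, uu (i + (J + 1))

lemma uu_zero : uu 0 = 0 := by
  unfold uu gg
  norm_num

lemma partial_sum (J : ℕ) : ∑ j ∈ Finset.range (J + 1), uu j = ∑ j ∈ Finset.Icc 1 J, uu j := by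
  have h : Finset.Icc 1 J = (Finset.range (J + 1)).erase 0 := by
    ext x
    simp [Nat.lt_succ_iff]
    omega
  rw [h, Finset.sum_erase _ uu_zero]

lemma S_split (J : ℕ) : SS = (∑ j ∈ Finset.Icc 1 J, uu j) + tailT J := by
  rw [← partial_sum]
  exact (Summable.sum_add_tsum_nat_add (J + 1) uu_summable).symm

lemma W_fiber (n : ℕ) : WW n = ∑ j ∈ Finset.Icc 1 (Jn n), (cnt n j : ℝ) * gg j := by
  unfold WW
  have hmaps : ∀ m ∈ oddF n, lf n m ∈ Finset.Icc 1 (Jn n) := by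
    intro m hm
    obtain ⟨hmn, hmo⟩ := mem_oddF.mp hm
    simp only [Finset.mem_Icc]
    constructor
    · unfold lf; omega
    · unfold lf Jn
      have : Nat.log 2 (n / m) ≤ Nat.log 2 n := Nat.log_mono_right (Nat.div_le_self n m)
      omega
  rw [← Finset.sum_fiberwise_of_maps_to hmaps (fun m => gg (lf n m))]
  apply Finset.sum_congr rfl
  intro j hj
  rw [Finset.sum_congr rfl (fun m hm => ?_), Finset.sum_const, nsmul_eq_mul]
  · rfl
  · have := (Finset.mem_filter.mp hm).2
    rw [this]

lemma term_bound (n : ℕ) (hn : 1 ≤ n) (j : ℕ) (hj1 : 1 ≤ j) (hjJ : j ≤ Jn n) :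
    |(cnt n j : ℝ) * gg j / n - uu j| ≤ 2 * (Jn n : ℝ) / n := by
  obtain ⟨s, rfl⟩ : ∃ s, j = s + 1 := ⟨j - 1, by omega⟩
  have hb := cnt_bound n s hn
  have hn0 : (0:ℝ) < n := by exact_mod_cast hn
  have hiden : (cnt n (s+1) : ℝ) * gg (s+1) / n - uu (s+1)
      = (gg (s+1) / n) * ((cnt n (s+1) : ℝ) - n / 2 ^ (s + 2)) := by
    unfold uu
    have h21 : s + 1 + 1 = s + 2 := by omega
    rw [h21]
    field_simp
  rw [hiden, abs_mul, abs_of_nonneg (div_nonneg (gg_nonneg _) hn0.le)]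
  have h1 : gg (s+1) / n * |(cnt n (s+1) : ℝ) - n / 2 ^ (s + 2)| ≤ gg (s+1) / n * 2 :=
    mul_le_mul_of_nonneg_left hb (div_nonneg (gg_nonneg _) hn0.le)
  apply h1.trans
  have h2 : gg (s+1) ≤ (Jn n : ℝ) := by
    have := gg_le (s+1)
    have hc : ((s+1:ℕ):ℝ) ≤ (Jn n : ℝ) := by exact_mod_cast hjJ
    linarith
  calc gg (s+1) / n * 2 = 2 * gg (s+1) / n := by ring
    _ ≤ 2 * (Jn n : ℝ) / n := by gcongr
  
lemma main_est (n : ℕ) (hn : 1 ≤ n) :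
    |WW n / n - SS| ≤ 2 * (Jn n : ℝ) ^ 2 / n + |tailT (Jn n)| := by
  set J := Jn n with hJ
  have hn0 : (0:ℝ) < n := by exact_mod_cast hn
  rw [S_split J, W_fiber n]
  rw [Finset.sum_div]
  have hsplit : ∑ j ∈ Finset.Icc 1 J, (cnt n j : ℝ) * gg j / n
      - ((∑ j ∈ Finset.Icc 1 J, uu j) + tailT J)
      = (∑ j ∈ Finset.Icc 1 J, ((cnt n j : ℝ) * gg j / n - uu j)) - tailT J := by
    rw [Finset.sum_sub_distrib]
    ring
  rw [hsplit]
  apply (abs_sub _ _).trans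
  gcongr
  apply (Finset.abs_sum_le_sum_abs _ _).trans
  have hbd : ∀ j ∈ Finset.Icc 1 J, |(cnt n j : ℝ) * gg j / n - uu j| ≤ 2 * (J:ℝ) / n := by
    intro j hj
    obtain ⟨h1, h2⟩ := Finset.mem_Icc.mp hj
    exact term_bound n hn j h1 h2
  apply (Finset.sum_le_sum hbd).trans
  rw [Finset.sum_const, Nat.card_Icc]
  have hcard : (J + 1 - 1) = J := by omega
  rw [hcard, nsmul_eq_mul]
  calc (J:ℝ) * (2 * J / n) = 2 * (J:ℝ)^2 / n := by ring
    _ ≤ 2 * (J:ℝ)^2 / n := le_refl _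

open Filter in
lemma log_tendsto : Tendsto (fun n : ℕ => Nat.log 2 n) atTop atTop := by
  rw [tendsto_atTop]
  intro b
  filter_upwards [eventually_ge_atTop (2 ^ b)] with n hn
  have hn0 : n ≠ 0 := by
    have : (1:ℕ) ≤ 2 ^ b := Nat.one_le_two_pow
    omega
  exact (Nat.le_log_iff_pow_le (by norm_num) hn0).mpr hn

open Filter in
lemma tail_tendsto : Tendsto (fun n : ℕ => |tailT (Jn n)|) atTop (nhds 0) := by
  have h0 := tendsto_sum_nat_add uu
  have hcomp : Tendsto (fun n : ℕ => Jn n + 1) atTop atTop := by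
    exact tendsto_atTop_mono (fun n => by unfold Jn; omega) log_tendsto
  have := (h0.comp hcomp).abs
  simpa [tailT] using this

open Filter in
lemma real_bound_tendsto :
    Tendsto (fun x : ℝ => 2 * (Real.logb 2 x + 2) ^ 2 / x) atTop (nhds 0) := by
  have t1 : Tendsto (fun x : ℝ => (Real.log x) ^ 2 / x) atTop (nhds 0) := by
    simpa using Real.tendsto_pow_log_div_mul_add_atTop 1 0 2 one_ne_zero
  have t2 : Tendsto (fun x : ℝ => Real.log x / x) atTop (nhds 0) := by
    simpa using Real.tendsto_pow_log_div_mul_add_atTop 1 0 1 one_ne_zero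
  have t3 : Tendsto (fun x : ℝ => x⁻¹) atTop (nhds 0) := tendsto_inv_atTop_zero
  have hl2 : Real.log 2 ≠ 0 := (Real.log_pos (by norm_num)).ne'
  have hc := ((t1.const_mul (2 / (Real.log 2) ^ 2)).add
    ((t2.const_mul (8 / Real.log 2)).add (t3.const_mul 8)))
  simp only [mul_zero, add_zero] at hc
  apply hc.congr'
  filter_upwards [eventually_gt_atTop (0:ℝ)] with x hx
  simp only [Real.logb]
  field_simp
  ring

open Filter in
lemma sq_tendsto : Tendsto (fun n : ℕ => 2 * (Jn n : ℝ) ^ 2 / n) atTop (nhds 0) := by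
  have hnat := real_bound_tendsto.comp (tendsto_natCast_atTop_atTop (R := ℝ))
  apply squeeze_zero' (Eventually.of_forall fun n => by positivity) ?_ hnat
  filter_upwards [eventually_ge_atTop 1] with n hn
  have hn0 : (0:ℝ) < n := by exact_mod_cast hn
  have hlb : ((Nat.log 2 n : ℕ) : ℝ) ≤ Real.logb 2 n := by
    have hpow : ((2:ℝ)) ^ (Nat.log 2 n) ≤ n := by
      exact_mod_cast Nat.pow_log_le_self 2 (by omega)
    have := Real.logb_le_logb_of_le (by norm_num : (1:ℝ) < 2) (by positivity) hpow
    rwa [Real.logb_pow, Real.logb_self_eq_one (by norm_num), mul_one] at this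
  have hJ : ((Jn n : ℕ) : ℝ) ≤ Real.logb 2 n + 2 := by
    unfold Jn
    push_cast
    linarith
  have hJ0 : (0:ℝ) ≤ ((Jn n : ℕ) : ℝ) := Nat.cast_nonneg _
  have hlogb0 : 0 ≤ Real.logb 2 (n:ℝ) := Real.logb_nonneg (by norm_num) (by exact_mod_cast hn)
  show 2 * (Jn n : ℝ)^2 / n ≤ 2 * (Real.logb 2 (n:ℝ) + 2)^2 / n
  apply div_le_div₀ (by positivity) ?_ hn0 le_rfl
  have := pow_le_pow_left₀ hJ0 hJ 2
  linarith

open Filter in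
lemma W_tendsto : Tendsto (fun n : ℕ => WW n / n) atTop (nhds SS) := by
  rw [tendsto_iff_dist_tendsto_zero]
  apply squeeze_zero' (g := fun n : ℕ => 2 * (Jn n : ℝ) ^ 2 / n + |tailT (Jn n)|)
    (Eventually.of_forall fun n => dist_nonneg) ?hle ?htend
  case hle =>
    filter_upwards [eventually_ge_atTop 1] with n hn
    rw [Real.dist_eq]
    exact main_est n hn
  case htend =>
    have := sq_tendsto.add tail_tendsto
    simpa using this


lemma F_eq_fib (F : ℕ → ℕ) (hF0 : F 0 = 1) (hF1 : F 1 = 2)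
    (hFrec : ∀ j, F (j + 2) = F (j + 1) + F j) : ∀ j, F j = Nat.fib (j + 2) := by
  intro j
  induction j using Nat.twoStepInduction with
  | zero => rw [hF0]; decide
  | one => rw [hF1]; decide
  | more j ih1 ih2 =>
    rw [hFrec, ih1, ih2]
    conv_rhs => rw [show j + 2 + 2 = (j + 2) + 2 from rfl, Nat.fib_add_two]
    have : j + 2 + 1 = j + 1 + 2 := by omega
    rw [this]
    omega

lemma SS_eq (F : ℕ → ℕ) (hFfib : ∀ j, F j = Nat.fib (j + 2)) :
    SS = 1 / (2 * Real.log 2) * ∑' j : ℕ, Real.log (F (j + 1)) / 2 ^ (j + 1) := by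
  have h0 : SS = ∑' j, uu (j + 1) := by
    rw [SS, Summable.tsum_eq_zero_add uu_summable, uu_zero, zero_add]
  rw [h0]
  have hterm : ∀ j : ℕ, uu (j + 1)
      = 1 / (2 * Real.log 2) * (Real.log (F (j + 1)) / 2 ^ (j + 1)) := by
    intro j
    rw [hFfib]
    unfold uu gg
    simp only [Real.logb]
    have h2 : (2:ℝ) ^ (j + 1 + 1) = 2 * 2 ^ (j + 1) := by ring
    rw [h2]
    ring
  rw [tsum_congr hterm, tsum_mul_left]

lemma logb_prod_eq (n : ℕ) :
    Real.logb 2 ((∏ m ∈ oddF n, Nat.fib (lf n m + 2) : ℕ) : ℝ) = WW n := by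
  rw [Nat.cast_prod]
  unfold WW gg
  simp only [Real.logb]
  rw [Real.log_prod (fun m _ => by
    have := fib_pos' (lf n m)
    positivity)]
  rw [Finset.sum_div]

/-- With `N_n` the number of words `(x_1,…,x_n) ∈ {0,1}^n` such that `x_k x_{2k} = 0`
whenever `2k ≤ n`, the limit `lim (log₂ N_n)/n` exists and equals
`(1/(2 log 2)) ∑_{j=1}^∞ (log F_j)/2^j`, where `F_0 = 1`, `F_1 = 2`,
`F_{j+2} = F_{j+1} + F_j`. -/
theorem stmt_4 (F : ℕ → ℕ) (hF0 : F 0 = 1) (hF1 : F 1 = 2)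
    (hFrec : ∀ j, F (j + 2) = F (j + 1) + F j)
    (N : ℕ → ℕ)
    (hN : ∀ n : ℕ, N n = Nat.card {x : Fin n → Fin 2 //
        ∀ k : ℕ, ∀ _h1 : 1 ≤ k, ∀ _h2 : 2 * k ≤ n,
          ¬(x ⟨k - 1, by omega⟩ = 1 ∧ x ⟨2 * k - 1, by omega⟩ = 1)}) :
    Tendsto (fun n : ℕ => Real.logb 2 (N n) / n) atTop
      (nhds (1 / (2 * Real.log 2) * ∑' j : ℕ, Real.log (F (j + 1)) / 2 ^ (j + 1))) := by
  have hFf : ∀ j, F j = Nat.fib (j + 2) := F_eq_fib F hF0 hF1 hFrec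
  rw [← SS_eq F hFf]
  apply Filter.Tendsto.congr' ?_ W_tendsto
  filter_upwards [eventually_ge_atTop 1] with n hn
  have hNprod : N n = ∏ m ∈ oddF n, Nat.fib (lf n m + 2) := by
    rw [hN n]
    exact card_words n
  rw [hNprod, logb_prod_eq n]
end

section
/- Let ε_1, ε_2, ... be i.i.d. random variables taking values ±α each with probability 1/2, where 0 < α < 2π, and let L_n = |Σ_{k=1}^n e^{i(ε_1 + ... + ε_k)}|. Then E[L_n^2] = n(1 + cos α)/(1 − cos α) − 2 cos α (1 − cos^n α)/(1 − cos α)^2. -/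
open MeasureTheory ProbabilityTheory Finset

lemma geo_aux (c : ℝ) (n : ℕ) :
    (1 - c) * ∑ d ∈ Ioc 0 n, c ^ d = c * (1 - c ^ n) := by
  induction n with
  | zero => simp
  | succ n ih =>
    rw [Finset.sum_Ioc_succ_top (Nat.zero_le n)]
    ring_nf
    ring_nf at ih
    linear_combination ih

lemma rev_aux (c : ℝ) (n : ℕ) :
    ∑ k ∈ Ioc 0 n, c ^ (n + 1 - k) = ∑ d ∈ Ioc 0 n, c ^ d := by
  refine Finset.sum_nbij' (fun k => n + 1 - k) (fun d => n + 1 - d) ?_ ?_ ?_ ?_ ?_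
  · intro a ha; simp at ha ⊢; omega
  · intro a ha; simp at ha ⊢; omega
  · intro a ha; simp at ha; omega
  · intro a ha; simp at ha; omega
  · intro a ha; rfl

lemma main_sum_aux (c : ℝ) (hc : c ≠ 1) (n : ℕ) :
    ∑ j ∈ Ioc 0 n, ∑ k ∈ Ioc 0 n, c ^ (j - k + (k - j)) =
      n * (1 + c) / (1 - c) - 2 * c * (1 - c ^ n) / (1 - c) ^ 2 := by
  have h1 : (1 : ℝ) - c ≠ 0 := sub_ne_zero.2 (Ne.symm hc)
  induction n with
  | zero => simp
  | succ n ih =>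
    have hG : ∑ d ∈ Ioc 0 n, c ^ d = c * (1 - c ^ n) / (1 - c) := by
      rw [eq_div_iff h1]; linear_combination geo_aux c n
    simp only [Finset.sum_Ioc_succ_top (Nat.zero_le n)]
    have e1 : ∑ j ∈ Ioc 0 n, c ^ (j - (n + 1) + (n + 1 - j)) = ∑ d ∈ Ioc 0 n, c ^ d := by
      rw [← rev_aux c n]
      refine Finset.sum_congr rfl fun j hj => ?_
      simp at hj; congr 1; omega
    have e2 : ∑ k ∈ Ioc 0 n, c ^ (n + 1 - k + (k - (n + 1))) = ∑ d ∈ Ioc 0 n, c ^ d := by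
      rw [← rev_aux c n]
      refine Finset.sum_congr rfl fun j hj => ?_
      simp at hj; congr 1; omega
    rw [Finset.sum_add_distrib, e1, ih, e2, hG]
    simp only [Nat.sub_self, add_zero, pow_zero]
    push_cast
    field_simp
    ring

lemma abs_sq_sum_exp (s : Finset ℕ) (x : ℕ → ℝ) :
    ‖∑ k ∈ s, Complex.exp (Complex.I * (x k : ℂ))‖ ^ 2
      = ∑ j ∈ s, ∑ k ∈ s, Real.cos (x j - x k) := by
  have h1 : (‖∑ k ∈ s, Complex.exp (Complex.I * (x k : ℂ))‖ ^ 2 : ℝ)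
      = ((∑ j ∈ s, Complex.exp (Complex.I * (x j : ℂ))) *
          ∑ k ∈ s, (starRingEnd ℂ) (Complex.exp (Complex.I * (x k : ℂ)))).re := by
    rw [Complex.sq_norm, ← map_sum, Complex.mul_conj]
    simp
  rw [h1, Finset.sum_mul_sum]
  rw [Complex.re_sum]
  refine Finset.sum_congr rfl fun j _ => ?_
  rw [Complex.re_sum]
  refine Finset.sum_congr rfl fun k _ => ?_
  rw [← Complex.exp_conj, ← Complex.exp_add]
  have : Complex.I * (x j : ℂ) + (starRingEnd ℂ) (Complex.I * (x k : ℂ))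
      = ((x j - x k : ℝ) : ℂ) * Complex.I := by
    simp [map_mul, Complex.conj_I, Complex.conj_ofReal]
    ring
  rw [this, Complex.exp_ofReal_mul_I_re]

/-- Feller's computation: if `ε_1, ε_2, …` are i.i.d. random variables taking the values
`±α` each with probability `1/2`, where `0 < α < 2π`, and
`L_n = |∑_{k=1}^n e^{i(ε_1 + ⋯ + ε_k)}|`, then
`E[L_n²] = n (1+cos α)/(1−cos α) − 2 cos α (1 − cosⁿ α)/(1−cos α)²`. -/
theorem stmt_5 {Ω : Type*} [MeasurableSpace Ω] (μ : Measure Ω) [IsProbabilityMeasure μ]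
    (α : ℝ) (hα : 0 < α) (hα2 : α < 2 * Real.pi)
    (ε : ℕ → Ω → ℝ) (hmeas : ∀ k, Measurable (ε k))
    (hindep : iIndepFun ε μ)
    (hdist : ∀ k, Measure.map (ε k) μ =
      (2 : ENNReal)⁻¹ • Measure.dirac α + (2 : ENNReal)⁻¹ • Measure.dirac (-α))
    (n : ℕ) :
    ∫ ω, (‖∑ k ∈ Icc 1 n,
        Complex.exp (Complex.I * ((∑ j ∈ Icc 1 k, ε j ω : ℝ) : ℂ))‖) ^ 2 ∂μ =
      n * (1 + Real.cos α) / (1 - Real.cos α) -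
        2 * Real.cos α * (1 - (Real.cos α) ^ n) / (1 - Real.cos α) ^ 2 := by
  set c : ℝ := Real.cos α with hc_def
  -- cos α ≠ 1
  have h2π : (0 : ℝ) < 2 * Real.pi := by positivity
  have hc : c ≠ 1 := by
    intro h
    rcases (Real.cos_eq_one_iff α).1 h with ⟨m, hm⟩
    have hm0 : (0 : ℝ) < (m : ℝ) := by nlinarith
    have hm1 : (m : ℝ) < 1 := by nlinarith
    have h0 : (0 : ℤ) < m := by exact_mod_cast hm0
    have h1 : m < 1 := by exact_mod_cast hm1
    omega
  -- measurability of partial sums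
  have hσ : ∀ s : Finset ℕ, Measurable fun ω => ∑ m ∈ s, ε m ω :=
    fun s => Finset.measurable_sum s fun m _ => hmeas m
  -- bounded measurable functions are integrable
  have hbint : ∀ g : Ω → ℝ, Measurable g → (∀ ω, ‖g ω‖ ≤ 1) → Integrable g μ :=
    fun g hg hb =>
      (integrable_const (1 : ℝ)).mono' hg.aestronglyMeasurable (ae_of_all _ hb)
  -- expectation of a bounded function of a single ε
  have hsingle : ∀ (m : ℕ) (f : ℝ → ℝ), Measurable f → (∀ x, ‖f x‖ ≤ 1) →
      ∫ ω, f (ε m ω) ∂μ = (f α + f (-α)) / 2 := by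
    intro m f hf hb
    rw [← integral_map (hmeas m).aemeasurable hf.aestronglyMeasurable, hdist m]
    have hi : ∀ a : ℝ, Integrable f ((2 : ENNReal)⁻¹ • Measure.dirac a) := by
      intro a
      refine ⟨hf.aestronglyMeasurable, ?_⟩
      rw [HasFiniteIntegral, lintegral_smul_measure, lintegral_dirac]
      exact ENNReal.mul_lt_top (by simp) (by simp)
    rw [integral_add_measure (hi α) (hi (-α)), integral_smul_measure,
      integral_smul_measure, integral_dirac, integral_dirac]
    simp only [ENNReal.toReal_inv, ENNReal.toReal_ofNat, smul_eq_mul]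
    ring
  have hcosm : ∀ m, ∫ ω, Real.cos (ε m ω) ∂μ = c := by
    intro m
    rw [hsingle m Real.cos Real.measurable_cos
      (fun x => by rw [Real.norm_eq_abs]; exact Real.abs_cos_le_one x)]
    rw [Real.cos_neg]; rw [hc_def]; ring
  have hsinm : ∀ m, ∫ ω, Real.sin (ε m ω) ∂μ = 0 := by
    intro m
    rw [hsingle m Real.sin Real.measurable_sin
      (fun x => by rw [Real.norm_eq_abs]; exact Real.abs_sin_le_one x)]
    rw [Real.sin_neg]; ring
  -- key computation on consecutive blocks
  have key : ∀ k d : ℕ,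
      (∫ ω, Real.cos (∑ m ∈ Ioc k (k + d), ε m ω) ∂μ = c ^ d) ∧
      (∫ ω, Real.sin (∑ m ∈ Ioc k (k + d), ε m ω) ∂μ = 0) := by
    intro k d
    induction d with
    | zero => simp
    | succ d ih =>
      set T : Ω → ℝ := fun ω => ∑ m ∈ Ioc k (k + d), ε m ω with hT_def
      have hTm : Measurable T := hσ _
      have hstep : ∀ ω, ∑ m ∈ Ioc k (k + (d + 1)), ε m ω = T ω + ε (k + d + 1) ω := by
        intro ω
        have h' : k + (d + 1) = (k + d) + 1 := by omega
        rw [h', Finset.sum_Ioc_succ_top (Nat.le_add_right k d)]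
      have hind : IndepFun T (ε (k + d + 1)) μ := by
        have h := hindep.indepFun_finsetSum_of_notMem (fun i => hmeas i)
          (s := Ioc k (k + d)) (i := k + d + 1) (by simp)
        have he : (∑ j ∈ Ioc k (k + d), ε j) = T := by
          funext ω; rw [hT_def]; simp [Finset.sum_apply]
        rwa [he] at h
      have hindc : ∀ (f g : ℝ → ℝ), Measurable f → Measurable g →
          IndepFun (fun ω => f (T ω)) (fun ω => g (ε (k + d + 1) ω)) μ :=
        fun f g hf hg => hind.comp hf hg
      have hbound : ∀ (f g : ℝ → ℝ), (∀ x, ‖f x‖ ≤ 1) → (∀ x, ‖g x‖ ≤ 1) →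
          ∀ ω, ‖f (T ω) * g (ε (k + d + 1) ω)‖ ≤ 1 := by
        intro f g hf hg ω
        rw [norm_mul]
        exact mul_le_one₀ (hf _) (norm_nonneg _) (hg _)
      have hcb : ∀ x : ℝ, ‖Real.cos x‖ ≤ 1 :=
        fun x => by rw [Real.norm_eq_abs]; exact Real.abs_cos_le_one x
      have hsb : ∀ x : ℝ, ‖Real.sin x‖ ≤ 1 :=
        fun x => by rw [Real.norm_eq_abs]; exact Real.abs_sin_le_one x
      have hi1 : Integrable (fun ω => Real.cos (T ω) * Real.cos (ε (k + d + 1) ω)) μ :=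
        hbint _ (hTm.cos.mul (hmeas _).cos) (hbound _ _ hcb hcb)
      have hi2 : Integrable (fun ω => Real.sin (T ω) * Real.sin (ε (k + d + 1) ω)) μ :=
        hbint _ (hTm.sin.mul (hmeas _).sin) (hbound _ _ hsb hsb)
      have hi3 : Integrable (fun ω => Real.sin (T ω) * Real.cos (ε (k + d + 1) ω)) μ :=
        hbint _ (hTm.sin.mul (hmeas _).cos) (hbound _ _ hsb hcb)
      have hi4 : Integrable (fun ω => Real.cos (T ω) * Real.sin (ε (k + d + 1) ω)) μ :=
        hbint _ (hTm.cos.mul (hmeas _).sin) (hbound _ _ hcb hsb)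
      constructor
      · have h1 : ∫ ω, Real.cos (∑ m ∈ Ioc k (k + (d + 1)), ε m ω) ∂μ
            = ∫ ω, (Real.cos (T ω) * Real.cos (ε (k + d + 1) ω)
                - Real.sin (T ω) * Real.sin (ε (k + d + 1) ω)) ∂μ :=
          integral_congr_ae (ae_of_all _ fun ω => by dsimp only; rw [hstep ω, Real.cos_add])
        rw [h1, integral_sub hi1 hi2,
          (hindc _ _ Real.measurable_cos Real.measurable_cos).integral_fun_mul_eq_mul_integral
            (hTm.cos.aestronglyMeasurable) ((hmeas _).cos.aestronglyMeasurable),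
          (hindc _ _ Real.measurable_sin Real.measurable_sin).integral_fun_mul_eq_mul_integral
            (hTm.sin.aestronglyMeasurable) ((hmeas _).sin.aestronglyMeasurable),
          ih.1, ih.2, hcosm, hsinm]
        ring
      · have h1 : ∫ ω, Real.sin (∑ m ∈ Ioc k (k + (d + 1)), ε m ω) ∂μ
            = ∫ ω, (Real.sin (T ω) * Real.cos (ε (k + d + 1) ω)
                + Real.cos (T ω) * Real.sin (ε (k + d + 1) ω)) ∂μ :=
          integral_congr_ae (ae_of_all _ fun ω => by dsimp only; rw [hstep ω, Real.sin_add])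
        rw [h1, integral_add hi3 hi4,
          (hindc _ _ Real.measurable_sin Real.measurable_cos).integral_fun_mul_eq_mul_integral
            (hTm.sin.aestronglyMeasurable) ((hmeas _).cos.aestronglyMeasurable),
          (hindc _ _ Real.measurable_cos Real.measurable_sin).integral_fun_mul_eq_mul_integral
            (hTm.cos.aestronglyMeasurable) ((hmeas _).sin.aestronglyMeasurable),
          ih.1, ih.2, hcosm, hsinm]
        ring
  -- expectation of cos of differences of partial sums
  have base : ∀ j k : ℕ, k ≤ j →
      ∫ ω, Real.cos ((∑ m ∈ Icc 1 j, ε m ω) - (∑ m ∈ Icc 1 k, ε m ω)) ∂μ = c ^ (j - k) := by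
    intro j k hkj
    have hdiff : ∀ ω, (∑ m ∈ Icc 1 j, ε m ω) - (∑ m ∈ Icc 1 k, ε m ω)
        = ∑ m ∈ Ioc k (k + (j - k)), ε m ω := by
      intro ω
      have h' : k + (j - k) = j := by omega
      rw [h', show (1 : ℕ) = 0 + 1 from rfl, Finset.Icc_add_one_left_eq_Ioc, Finset.Icc_add_one_left_eq_Ioc]
      have h2 := Finset.sum_Ioc_consecutive (fun m => ε m ω) (Nat.zero_le k) hkj
      linarith [h2]
    rw [integral_congr_ae (ae_of_all _ fun ω => by rw [hdiff ω])]
    exact (key k (j - k)).1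
  have ecos : ∀ j k : ℕ,
      ∫ ω, Real.cos ((∑ m ∈ Icc 1 j, ε m ω) - (∑ m ∈ Icc 1 k, ε m ω)) ∂μ
        = c ^ (j - k + (k - j)) := by
    intro j k
    rcases le_total k j with h | h
    · rw [base j k h]; congr 1; omega
    · have hflip : ∀ ω, Real.cos ((∑ m ∈ Icc 1 j, ε m ω) - (∑ m ∈ Icc 1 k, ε m ω))
          = Real.cos ((∑ m ∈ Icc 1 k, ε m ω) - (∑ m ∈ Icc 1 j, ε m ω)) := by
        intro ω; rw [← Real.cos_neg, neg_sub]
      rw [integral_congr_ae (ae_of_all _ hflip), base k j h]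
      congr 1; omega
  -- integrability of each term
  have hint : ∀ j k : ℕ, Integrable
      (fun ω => Real.cos ((∑ m ∈ Icc 1 j, ε m ω) - (∑ m ∈ Icc 1 k, ε m ω))) μ :=
    fun j k => hbint _ (((hσ _).sub (hσ _)).cos)
      (fun ω => by rw [Real.norm_eq_abs]; exact Real.abs_cos_le_one _)
  -- put everything together
  have hpt : ∀ ω : Ω, (‖∑ k ∈ Icc 1 n,
        Complex.exp (Complex.I * ((∑ j ∈ Icc 1 k, ε j ω : ℝ) : ℂ))‖) ^ 2
      = ∑ j ∈ Icc 1 n, ∑ k ∈ Icc 1 n,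
          Real.cos ((∑ m ∈ Icc 1 j, ε m ω) - (∑ m ∈ Icc 1 k, ε m ω)) :=
    fun ω => abs_sq_sum_exp (Icc 1 n) (fun k => ∑ j ∈ Icc 1 k, ε j ω)
  rw [integral_congr_ae (ae_of_all _ hpt)]
  rw [integral_finset_sum _ (fun j _ => integrable_finset_sum _ fun k _ => hint j k)]
  have h2 : ∀ j ∈ Icc 1 n, ∫ ω, ∑ k ∈ Icc 1 n,
      Real.cos ((∑ m ∈ Icc 1 j, ε m ω) - (∑ m ∈ Icc 1 k, ε m ω)) ∂μ
      = ∑ k ∈ Icc 1 n, c ^ (j - k + (k - j)) := by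
    intro j _
    rw [integral_finset_sum _ fun k _ => hint j k]
    exact Finset.sum_congr rfl fun k _ => ecos j k
  rw [Finset.sum_congr rfl h2]
  rw [show (Icc 1 n : Finset ℕ) = Ioc 0 n from by rw [← Finset.Icc_add_one_left_eq_Ioc]; rfl]
  exact main_sum_aux c hc n
end

section
/- The lower Hausdorff dimension of a Borel probability measure μ equals the μ-essential infimum of the lower local dimension: dim_* μ = ess inf_μ liminf_{r→0} log μ(B(x,r))/log r. -/
open MeasureTheory Filter
open scoped ENNReal NNReal Topology

variable {X : Type*} [MetricSpace X] [CompleteSpace X] [SecondCountableTopology X]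
  [MeasurableSpace X] [BorelSpace X]

/-- The lower Hausdorff dimension of a measure:
`dim_* μ = inf {dim_H A : A Borel, μ(A) > 0}`. -/
noncomputable def lowerDim (μ : Measure X) : ℝ≥0∞ :=
  ⨅ (A : Set X) (_ : MeasurableSet A) (_ : 0 < μ A), dimH A

/-- The lower local dimension of `μ` at `x`:
`liminf_{r→0⁺} log μ(B(x,r)) / log r` (as an extended nonnegative real). -/
noncomputable def lowerLocalDim (μ : Measure X) (x : X) : ℝ≥0∞ :=
  liminf (fun r : ℝ =>
    ENNReal.ofReal (Real.log (μ (Metric.closedBall x r)).toReal / Real.log r)) (𝓝[>] 0)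

/-- There is an open null set off which all closed balls have positive measure. -/
private lemma exists_null_open (μ : Measure X) :
    ∃ U : Set X, μ U = 0 ∧ ∀ x, x ∉ U → ∀ r : ℝ, 0 < r → 0 < μ (Metric.closedBall x r) := by
  obtain ⟨T, hTc, hTsub, hTU⟩ :=
    TopologicalSpace.isOpen_sUnion_countable {s : Set X | IsOpen s ∧ μ s = 0} fun s hs => hs.1
  refine ⟨⋃₀ {s : Set X | IsOpen s ∧ μ s = 0}, ?_, ?_⟩
  · rw [← hTU]
    exact (measure_sUnion_null_iff hTc).2 fun s hs => (hTsub hs).2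
  · intro x hx r hr
    rcases eq_or_lt_of_le (zero_le : 0 ≤ μ (Metric.closedBall x r)) with h | h
    · refine absurd (Set.mem_sUnion.2 ⟨Metric.ball x r, ?_, Metric.mem_ball_self hr⟩) hx
      exact ⟨Metric.isOpen_ball, measure_mono_null Metric.ball_subset_closedBall h.symm⟩
    · exact h

/-- Mass distribution principle. -/
private lemma measure_le_hausdorff (μ : Measure X) {c δ : ℝ}
    (hc : 0 < c) (hδ : 0 < δ) {S : Set X}
    (hS : ∀ x ∈ S, ∀ r : ℝ, 0 < r → r ≤ δ →
      μ (Metric.closedBall x r) ≤ ENNReal.ofReal (r ^ c)) :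
    μ S ≤ μH[c] S := by
  rw [Measure.hausdorffMeasure_apply]
  refine le_iSup₂_of_le (ENNReal.ofReal δ) (by simpa using hδ) ?_
  refine le_iInf fun t => le_iInf fun hcov => le_iInf fun hdiam => ?_
  have key : ∀ n : ℕ, μ (t n ∩ S) ≤ ⨆ _ : (t n).Nonempty, EMetric.diam (t n) ^ c := by
    intro n
    rcases Set.eq_empty_or_nonempty (t n ∩ S) with h | ⟨x, hxt, hxS⟩
    · simp [h]
    rw [iSup_pos ⟨x, hxt⟩]
    have hfin : EMetric.diam (t n) ≠ ∞ := ((hdiam n).trans_lt ENNReal.ofReal_lt_top).ne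
    have hsub : ∀ r : ℝ, (EMetric.diam (t n)).toReal ≤ r →
        t n ⊆ Metric.closedBall x r := by
      intro r hrr y hy
      have h1 : edist y x ≤ EMetric.diam (t n) := EMetric.edist_le_diam_of_mem hy hxt
      have h2 := ENNReal.toReal_mono hfin h1
      rw [Metric.mem_closedBall, dist_edist]
      exact h2.trans hrr
    have hdδ : (EMetric.diam (t n)).toReal ≤ δ := by
      have := ENNReal.toReal_mono ENNReal.ofReal_ne_top (hdiam n)
      rwa [ENNReal.toReal_ofReal hδ.le] at this
    rcases eq_or_lt_of_le (ENNReal.toReal_nonneg (a := EMetric.diam (t n))) with h0 | h0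
    · -- diam = 0
      have hzero : μ (t n ∩ S) ≤ 0 := by
        have hb : ∀ k : ℕ, μ (t n ∩ S) ≤ ENNReal.ofReal (δ * (1 / ((k : ℝ) + 1))) ^ c := by
          intro k
          have hk : (0:ℝ) < δ * (1 / ((k : ℝ) + 1)) := by positivity
          have hkδ : δ * (1 / ((k : ℝ) + 1)) ≤ δ := by
            rw [mul_one_div]
            exact div_le_self hδ.le (by push_cast; linarith)
          refine le_trans (measure_mono fun y hy =>
            hsub (δ * (1 / ((k : ℝ) + 1))) (by rw [← h0]; exact hk.le) hy.1) ?_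
          rw [ENNReal.ofReal_rpow_of_pos hk]
          exact hS x hxS _ hk hkδ
        have htend : Tendsto (fun k : ℕ => ENNReal.ofReal (δ * (1 / ((k : ℝ) + 1))) ^ c)
            atTop (𝓝 0) := by
          have h1 : Tendsto (fun k : ℕ => δ * (1 / ((k : ℝ) + 1))) atTop (𝓝 0) := by
            simpa using tendsto_one_div_add_atTop_nhds_zero_nat.const_mul δ
          have h2 : Tendsto (fun k : ℕ => ENNReal.ofReal (δ * (1 / ((k : ℝ) + 1))))
              atTop (𝓝 0) := by
            simpa using ENNReal.tendsto_ofReal (a := 0) h1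
          have h3 := (ENNReal.continuous_rpow_const (y := c)).tendsto 0
          simpa [ENNReal.zero_rpow_of_pos hc, Function.comp_def] using h3.comp h2
        exact ge_of_tendsto' htend hb
      simp only [nonpos_iff_eq_zero] at hzero
      simp [hzero]
    · refine le_trans (measure_mono fun y hy => hsub _ le_rfl hy.1) ?_
      refine le_trans (hS x hxS _ h0 hdδ) ?_
      rw [← ENNReal.ofReal_rpow_of_pos h0, ENNReal.ofReal_toReal hfin]
  calc μ S ≤ μ (⋃ n, t n ∩ S) := measure_mono (fun x hx => by
        rcases Set.mem_iUnion.1 (hcov hx) with ⟨n, hn⟩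
        exact Set.mem_iUnion.2 ⟨n, hn, hx⟩)
    _ ≤ ∑' n, μ (t n ∩ S) := measure_iUnion_le _
    _ ≤ _ := ENNReal.tsum_le_tsum key

private lemma ediam_closedBall_le {x : X} {r : ℝ} :
    EMetric.diam (Metric.closedBall x (4 * r)) ≤ ENNReal.ofReal (8 * r) := by
  refine EMetric.diam_le fun y hy z hz => ?_
  rw [edist_dist]
  refine ENNReal.ofReal_le_ofReal ?_
  have h1 := Metric.mem_closedBall.1 hy
  have h2 := Metric.mem_closedBall.1 hz
  calc dist y z ≤ dist y x + dist x z := dist_triangle _ _ _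
    _ ≤ 4 * r + 4 * r := by rw [dist_comm x z]; exact add_le_add h1 h2
    _ = 8 * r := by ring

/-- Vitali covering bound: the set of points at which arbitrarily small closed balls
satisfy `μ(B(x,r)) ≥ r ^ d` has Hausdorff dimension at most `d`. -/
private lemma dimH_freq_le (μ : Measure X) [IsFiniteMeasure μ] {d : ℝ≥0} (hd : 0 < d) :
    dimH {x : X | ∃ᶠ r in 𝓝[>] (0:ℝ),
        ENNReal.ofReal (r ^ (d:ℝ)) ≤ μ (Metric.closedBall x r)} ≤ (d : ℝ≥0∞) := by
  set S := {x : X | ∃ᶠ r in 𝓝[>] (0:ℝ),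
      ENNReal.ofReal (r ^ (d:ℝ)) ≤ μ (Metric.closedBall x r)} with hSdef
  have hd0 : (0:ℝ) < (d : ℝ) := hd
  set tset : ℕ → Set (X × ℝ) := fun n =>
    {p : X × ℝ | p.1 ∈ S ∧ p.2 ∈ Set.Ioc (0:ℝ) (1 / ((n : ℝ) + 1)) ∧
      ENNReal.ofReal (p.2 ^ (d:ℝ)) ≤ μ (Metric.closedBall p.1 p.2)} with htset
  have H : ∀ n : ℕ, ∃ u ⊆ tset n,
      (u.PairwiseDisjoint fun p : X × ℝ => Metric.closedBall p.1 p.2) ∧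
      ∀ a ∈ tset n, ∃ b ∈ u,
        Metric.closedBall a.1 a.2 ⊆ Metric.closedBall b.1 (4 * b.2) := fun n =>
    Vitali.exists_disjoint_subfamily_covering_enlargement_closedBall (tset n)
      Prod.fst Prod.snd (1 / ((n : ℝ) + 1)) (fun a ha => ha.2.1.2) 4 (by norm_num)
  choose u hu hdisj hcov using H
  have hpd : ∀ n, Pairwise (Function.onFun Disjoint fun b : ↥(u n) =>
      Metric.closedBall (b : X × ℝ).1 (b : X × ℝ).2) := by
    intro n i j hij
    exact hdisj n i.2 j.2 (fun h => hij (Subtype.ext h))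
  haveI hcnt : ∀ n, Countable ↥(u n) := by
    intro n
    have hcnt' := MeasureTheory.Measure.countable_meas_pos_of_disjoint_of_meas_iUnion_ne_top μ
      (As := fun b : ↥(u n) => Metric.closedBall (b : X × ℝ).1 (b : X × ℝ).2)
      (fun _ => measurableSet_closedBall) (hpd n) (measure_ne_top μ _)
    have huniv : {i : ↥(u n) |
        0 < μ (Metric.closedBall (i : X × ℝ).1 (i : X × ℝ).2)} = Set.univ := by
      refine Set.eq_univ_of_forall fun b => ?_
      have hb := hu n b.2
      have hbr : (0:ℝ) < (b : X × ℝ).2 := hb.2.1.1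
      calc (0:ℝ≥0∞) < ENNReal.ofReal ((b : X × ℝ).2 ^ (d:ℝ)) := by
            rw [ENNReal.ofReal_pos]; positivity
        _ ≤ _ := hb.2.2
    rw [huniv] at hcnt'
    exact Set.countable_univ_iff.mp hcnt'
  have hScov : ∀ n : ℕ, S ⊆ ⋃ b : ↥(u n),
      Metric.closedBall (b : X × ℝ).1 (4 * (b : X × ℝ).2) := by
    intro n x hx
    have hmem : Set.Ioo (0:ℝ) (1 / ((n : ℝ) + 1)) ∈ 𝓝[>] (0:ℝ) :=
      Ioo_mem_nhdsGT_of_mem ⟨le_rfl, by positivity⟩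
    have hev : ∀ᶠ r in 𝓝[>] (0:ℝ), r ∈ Set.Ioo (0:ℝ) (1 / ((n : ℝ) + 1)) := hmem
    obtain ⟨r, hr1, hr2⟩ := (hx.and_eventually hev).exists
    have hp : (x, r) ∈ tset n := ⟨hx, ⟨hr2.1, hr2.2.le⟩, hr1⟩
    obtain ⟨b, hbu, hbsub⟩ := hcov n (x, r) hp
    exact Set.mem_iUnion.2 ⟨⟨b, hbu⟩, hbsub (Metric.mem_closedBall_self hr2.1.le)⟩
  have key := Measure.hausdorffMeasure_le_liminf_tsum (d : ℝ) S
      (fun n : ℕ => ENNReal.ofReal (8 * (1 / ((n : ℝ) + 1))))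
      (by
        have h1 : Tendsto (fun n : ℕ => 8 * (1 / ((n : ℝ) + 1))) atTop (𝓝 0) := by
          simpa using tendsto_one_div_add_atTop_nhds_zero_nat.const_mul (8:ℝ)
        simpa using ENNReal.tendsto_ofReal (a := 0) h1)
      (fun n (b : ↥(u n)) => Metric.closedBall (b : X × ℝ).1 (4 * (b : X × ℝ).2))
      (Eventually.of_forall fun n => by
        intro b
        refine le_trans ediam_closedBall_le (ENNReal.ofReal_le_ofReal ?_)
        have hb := hu n b.2
        have := hb.2.1.2
        linarith)
      (Eventually.of_forall hScov)
  have hsum : ∀ n : ℕ,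
      (∑' b : ↥(u n),
        EMetric.diam (Metric.closedBall (b : X × ℝ).1 (4 * (b : X × ℝ).2)) ^ (d:ℝ))
      ≤ ENNReal.ofReal 8 ^ (d:ℝ) * μ Set.univ := by
    intro n
    have h1 : ∀ b : ↥(u n),
        EMetric.diam (Metric.closedBall (b : X × ℝ).1 (4 * (b : X × ℝ).2)) ^ (d:ℝ)
        ≤ ENNReal.ofReal 8 ^ (d:ℝ) *
          μ (Metric.closedBall (b : X × ℝ).1 (b : X × ℝ).2) := by
      intro b
      have hb := hu n b.2
      have hbr : (0:ℝ) < (b : X × ℝ).2 := hb.2.1.1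
      calc EMetric.diam (Metric.closedBall (b : X × ℝ).1 (4 * (b : X × ℝ).2)) ^ (d:ℝ)
          ≤ ENNReal.ofReal (8 * (b : X × ℝ).2) ^ (d:ℝ) :=
            ENNReal.rpow_le_rpow ediam_closedBall_le hd0.le
        _ = ENNReal.ofReal 8 ^ (d:ℝ) * ENNReal.ofReal (b : X × ℝ).2 ^ (d:ℝ) := by
            rw [ENNReal.ofReal_mul (by norm_num), ENNReal.mul_rpow_of_nonneg _ _ hd0.le]
        _ ≤ ENNReal.ofReal 8 ^ (d:ℝ) * μ (Metric.closedBall (b : X × ℝ).1 (b : X × ℝ).2) := by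
            refine mul_le_mul_right ?_ _
            rw [ENNReal.ofReal_rpow_of_pos hbr]
            exact hb.2.2
    calc (∑' b : ↥(u n),
        EMetric.diam (Metric.closedBall (b : X × ℝ).1 (4 * (b : X × ℝ).2)) ^ (d:ℝ))
        ≤ ∑' b : ↥(u n), ENNReal.ofReal 8 ^ (d:ℝ) *
            μ (Metric.closedBall (b : X × ℝ).1 (b : X × ℝ).2) := ENNReal.tsum_le_tsum h1
      _ = ENNReal.ofReal 8 ^ (d:ℝ) * ∑' b : ↥(u n),
            μ (Metric.closedBall (b : X × ℝ).1 (b : X × ℝ).2) := ENNReal.tsum_mul_left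
      _ = ENNReal.ofReal 8 ^ (d:ℝ) *
            μ (⋃ b : ↥(u n), Metric.closedBall (b : X × ℝ).1 (b : X × ℝ).2) := by
            rw [measure_iUnion (hpd n) (fun _ => measurableSet_closedBall)]
      _ ≤ ENNReal.ofReal 8 ^ (d:ℝ) * μ Set.univ :=
            mul_le_mul_right (measure_mono (Set.subset_univ _)) _
  have hlim : liminf (fun n : ℕ => ∑' b : ↥(u n),
      EMetric.diam (Metric.closedBall (b : X × ℝ).1 (4 * (b : X × ℝ).2)) ^ (d:ℝ)) atTop
      ≤ ENNReal.ofReal 8 ^ (d:ℝ) * μ Set.univ := by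
    calc _ ≤ liminf (fun _ : ℕ => ENNReal.ofReal 8 ^ (d:ℝ) * μ Set.univ) atTop :=
          liminf_le_liminf (Eventually.of_forall hsum)
      _ = _ := liminf_const _
  refine dimH_le_of_hausdorffMeasure_ne_top ?_
  exact ne_top_of_le_ne_top (ENNReal.mul_ne_top
    (ENNReal.rpow_ne_top_of_nonneg hd0.le ENNReal.ofReal_ne_top) (measure_ne_top μ _))
    (key.trans hlim)

/-- `dim_* μ` equals the `μ`-essential infimum of the lower local dimension. -/
theorem stmt_9 (μ : Measure X) [IsProbabilityMeasure μ] :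
    lowerDim μ = essInf (lowerLocalDim μ) μ := by
  refine le_antisymm ?_ ?_
  · -- lowerDim ≤ essInf
    by_contra hlt
    push_neg at hlt
    obtain ⟨d, hd1, hd2⟩ := ENNReal.lt_iff_exists_nnreal_btwn.1 hlt
    obtain ⟨d', hd'1, hd'2⟩ := ENNReal.lt_iff_exists_nnreal_btwn.1 hd2
    have hd0 : 0 < d := by
      rcases eq_or_lt_of_le (zero_le : 0 ≤ d) with h | h
      · exact absurd (h ▸ hd1) (by simp)
      · exact h
    obtain ⟨U, hU0, hUpos⟩ := exists_null_open μ
    set T := {x : X | lowerLocalDim μ x < (d : ℝ≥0∞)} \ U with hT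
    have hTpos : μ T ≠ 0 := by
      have h1 : μ {x : X | lowerLocalDim μ x < (d : ℝ≥0∞)} ≠ 0 := by
        intro h0
        have hae : ∀ᵐ x ∂μ, (d : ℝ≥0∞) ≤ lowerLocalDim μ x := by
          rw [ae_iff]; simpa [not_le] using h0
        exact absurd (le_essInf_of_ae_le _ hae) hd1.not_ge
      rwa [hT, measure_diff_null hU0]
    have hTS : T ⊆ {x : X | ∃ᶠ r in 𝓝[>] (0:ℝ),
        ENNReal.ofReal (r ^ ((d : ℝ≥0) : ℝ)) ≤ μ (Metric.closedBall x r)} := by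
      rintro x ⟨hx1, hx2⟩
      have hx1' : liminf (fun r : ℝ =>
          ENNReal.ofReal (Real.log (μ (Metric.closedBall x r)).toReal / Real.log r)) (𝓝[>] 0)
          < (d : ℝ≥0∞) := hx1
      have hfreq := frequently_lt_of_liminf_lt (h := hx1')
      have hev : ∀ᶠ r in 𝓝[>] (0:ℝ), r ∈ Set.Ioo (0:ℝ) 1 :=
        Ioo_mem_nhdsGT_of_mem ⟨le_rfl, one_pos⟩
      refine (hfreq.and_eventually hev).mono ?_
      rintro r ⟨hq, hr0, hr1⟩
      have hlr : Real.log r < 0 := Real.log_neg hr0 hr1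
      have hm0 : 0 < μ (Metric.closedBall x r) := hUpos x hx2 r hr0
      have hmfin : μ (Metric.closedBall x r) ≠ ∞ := measure_ne_top μ _
      set m : ℝ := (μ (Metric.closedBall x r)).toReal with hmdef
      have hm0' : 0 < m := ENNReal.toReal_pos hm0.ne' hmfin
      set q : ℝ := Real.log m / Real.log r with hqdef
      have hq' : q < (d : ℝ) := by
        rcases le_or_gt q 0 with h | h
        · exact h.trans_lt (by exact_mod_cast hd0)
        · have := (ENNReal.toReal_lt_toReal ENNReal.ofReal_ne_top ENNReal.coe_ne_top).2 hq
          rwa [ENNReal.toReal_ofReal h.le, ENNReal.coe_toReal] at this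
      have hlog : (d : ℝ) * Real.log r < Real.log m := by
        rw [div_lt_iff_of_neg hlr] at hq'
        linarith [hq']
      have hrm : r ^ ((d : ℝ≥0) : ℝ) < m := by
        have h7 : Real.log (r ^ ((d : ℝ≥0) : ℝ)) < Real.log m := by
          rw [Real.log_rpow hr0]; exact hlog
        exact (Real.log_lt_log_iff (Real.rpow_pos_of_pos hr0 _) hm0').1 h7
      calc ENNReal.ofReal (r ^ ((d : ℝ≥0) : ℝ)) ≤ ENNReal.ofReal m :=
            ENNReal.ofReal_le_ofReal hrm.le
        _ = μ (Metric.closedBall x r) := ENNReal.ofReal_toReal hmfin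
    have hdim : dimH {x : X | ∃ᶠ r in 𝓝[>] (0:ℝ),
        ENNReal.ofReal (r ^ ((d : ℝ≥0) : ℝ)) ≤ μ (Metric.closedBall x r)} ≤ (d : ℝ≥0∞) :=
      dimH_freq_le μ hd0
    have hH0 : μH[(d' : ℝ)] {x : X | ∃ᶠ r in 𝓝[>] (0:ℝ),
        ENNReal.ofReal (r ^ ((d : ℝ≥0) : ℝ)) ≤ μ (Metric.closedBall x r)} = 0 :=
      hausdorffMeasure_of_dimH_lt (hdim.trans_lt hd'1)
    obtain ⟨M, hSM, hMmeas, hM0⟩ := exists_measurable_superset_of_null hH0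
    have hdimM : dimH M ≤ (d' : ℝ≥0∞) :=
      dimH_le_of_hausdorffMeasure_ne_top (by rw [hM0]; exact ENNReal.zero_ne_top)
    have hAmeas : MeasurableSet (toMeasurable μ T ∩ M) :=
      (measurableSet_toMeasurable μ T).inter hMmeas
    have hApos : 0 < μ (toMeasurable μ T ∩ M) := by
      refine lt_of_lt_of_le ?_ (measure_mono (Set.subset_inter (subset_toMeasurable μ T)
        (hTS.trans hSM)))
      exact pos_iff_ne_zero.2 hTpos
    have hfinal : lowerDim μ ≤ dimH (toMeasurable μ T ∩ M) := by
      rw [lowerDim]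
      exact iInf_le_of_le _ (iInf_le_of_le hAmeas (iInf_le _ hApos))
    exact absurd (hfinal.trans ((dimH_mono Set.inter_subset_right).trans hdimM)) hd'2.not_ge
  · -- essInf ≤ lowerDim
    rw [lowerDim]
    refine le_iInf fun A => le_iInf fun hAmeas => le_iInf fun hApos => ?_
    by_contra hlt
    push_neg at hlt
    obtain ⟨c, hc1, hc2⟩ := ENNReal.lt_iff_exists_nnreal_btwn.1 hlt
    have hc0 : (0:ℝ) < (c : ℝ) := by
      rcases eq_or_lt_of_le (zero_le : 0 ≤ c) with h | h
      · exact absurd (h ▸ hc1) (by simp)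
      · exact_mod_cast h
    have hae : ∀ᵐ x ∂μ, (c : ℝ≥0∞) < lowerLocalDim μ x := ae_lt_of_lt_essInf hc2
    set P : X → Prop := fun x => ∃ δ : ℝ, 0 < δ ∧ ∀ r : ℝ, 0 < r → r ≤ δ →
      μ (Metric.closedBall x r) ≤ ENNReal.ofReal (r ^ (c : ℝ)) with hPdef
    have hae2 : ∀ᵐ x ∂μ, P x := by
      refine hae.mono fun x hx => ?_
      have hx' : (c : ℝ≥0∞) < liminf (fun r : ℝ =>
          ENNReal.ofReal (Real.log (μ (Metric.closedBall x r)).toReal / Real.log r))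
          (𝓝[>] 0) := hx
      have hev1 := eventually_lt_of_lt_liminf hx'
      have hev2 : ∀ᶠ r in 𝓝[>] (0:ℝ), r ∈ Set.Ioo (0:ℝ) 1 :=
        Ioo_mem_nhdsGT_of_mem ⟨le_rfl, one_pos⟩
      have hev : ∀ᶠ r in 𝓝[>] (0:ℝ),
          μ (Metric.closedBall x r) ≤ ENNReal.ofReal (r ^ (c : ℝ)) := by
        refine (hev1.and hev2).mono ?_
        rintro r ⟨hq, hr0, hr1⟩
        have hlr : Real.log r < 0 := Real.log_neg hr0 hr1
        have hmfin : μ (Metric.closedBall x r) ≠ ∞ := measure_ne_top μ _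
        rcases eq_or_lt_of_le (zero_le : 0 ≤ μ (Metric.closedBall x r)) with hm | hm
        · rw [← hm]; exact zero_le
        · set m : ℝ := (μ (Metric.closedBall x r)).toReal with hmdef
          have hm0' : 0 < m := ENNReal.toReal_pos hm.ne' hmfin
          have hq' : (c : ℝ) < Real.log m / Real.log r := by
            have := (ENNReal.toReal_lt_toReal ENNReal.coe_ne_top ENNReal.ofReal_ne_top).2 hq
            rw [ENNReal.coe_toReal] at this
            refine this.trans_le ?_
            rcases le_or_gt (Real.log m / Real.log r) 0 with h | h
            · rw [ENNReal.ofReal_of_nonpos h] at hq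
              exact absurd hq (by simp)
            · rw [ENNReal.toReal_ofReal h.le]
          have hlog : Real.log m < (c : ℝ) * Real.log r := by
            rw [lt_div_iff_of_neg hlr] at hq'
            linarith [hq']
          have hrm : m < r ^ (c : ℝ) := by
            have h7 : Real.log m < Real.log (r ^ (c : ℝ)) := by
              rw [Real.log_rpow hr0]; exact hlog
            exact (Real.log_lt_log_iff hm0' (Real.rpow_pos_of_pos hr0 _)).1 h7
          calc μ (Metric.closedBall x r) = ENNReal.ofReal m :=
                (ENNReal.ofReal_toReal hmfin).symm
            _ ≤ ENNReal.ofReal (r ^ (c : ℝ)) := ENNReal.ofReal_le_ofReal hrm.le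
      obtain ⟨δ, hδmem, hδsub⟩ := mem_nhdsGT_iff_exists_Ioo_subset.1 hev
      refine ⟨δ / 2, by simpa using hδmem, fun r hr0 hrle => ?_⟩
      exact hδsub ⟨hr0, lt_of_le_of_lt hrle (by simpa using hδmem)⟩
    set Am : ℕ → Set X := fun m => {x ∈ A | ∀ r : ℝ, 0 < r → r ≤ 1 / ((m : ℝ) + 1) →
      μ (Metric.closedBall x r) ≤ ENNReal.ofReal (r ^ (c : ℝ))} with hAm
    have hex : ∃ m : ℕ, μ (Am m) ≠ 0 := by
      by_contra hall
      push_neg at hall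
      have hsub : A ⊆ (⋃ m, Am m) ∪ {x | ¬ P x} := by
        intro x hxA
        by_cases hPx : P x
        · obtain ⟨δ, hδ, hP⟩ := hPx
          obtain ⟨m, hm⟩ := exists_nat_one_div_lt hδ
          exact Or.inl (Set.mem_iUnion.2 ⟨m, hxA, fun r hr0 hrle =>
            hP r hr0 (hrle.trans (by exact_mod_cast hm.le))⟩)
        · exact Or.inr hPx
      have : μ A = 0 := by
        refine measure_mono_null hsub ?_
        refine measure_union_null (measure_iUnion_null hall) ?_
        simpa [ae_iff] using hae2
      exact absurd this hApos.ne'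
    obtain ⟨m, hm⟩ := hex
    have h1 : μ (Am m) ≤ μH[(c : ℝ)] (Am m) :=
      measure_le_hausdorff μ hc0 (by positivity) (fun x hx => hx.2)
    have h2 : (c : ℝ≥0∞) ≤ dimH (Am m) :=
      le_dimH_of_hausdorffMeasure_ne_zero fun h0 =>
        hm (le_antisymm (h0 ▸ h1) zero_le)
    exact absurd (h2.trans (dimH_mono fun x hx => hx.1)) hc1.not_ge
end

section
/- The upper Hausdorff dimension of a Borel probability measure μ equals the μ-essential supremum of the lower local dimension: dim^* μ = ess sup_μ liminf_{r→0} log μ(B(x,r))/log r. -/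
open MeasureTheory Filter
open scoped ENNReal NNReal Topology

variable {X : Type*} [MetricSpace X] [CompleteSpace X] [SecondCountableTopology X]
  [MeasurableSpace X] [BorelSpace X]

/-- The upper Hausdorff dimension of a measure:
`dim^* μ = inf {dim_H A : A Borel, μ(Aᶜ) = 0}`. -/
noncomputable def upperDim (μ : Measure X) : ℝ≥0∞ :=
  ⨅ (A : Set X) (_ : MeasurableSet A) (_ : μ Aᶜ = 0), dimH A

lemma exists_small_ball (μ : Measure X) [IsProbabilityMeasure μ] {x : X} {s : ℝ≥0}
    (hpos : ∀ r : ℝ, 0 < r → μ (Metric.closedBall x r) ≠ 0)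
    (hlt : lowerLocalDim μ x < s) {δ : ℝ} (hδ : 0 < δ) :
    ∃ r : ℝ, 0 < r ∧ r ≤ δ ∧ ENNReal.ofReal (r ^ (s : ℝ)) < μ (Metric.closedBall x r) := by
  have hfreq := frequently_lt_of_liminf_lt (by isBoundedDefault) hlt
  have hev : ∀ᶠ r : ℝ in 𝓝[>] (0:ℝ), r ∈ Set.Ioo (0:ℝ) (min δ 1) :=
    eventually_of_mem (Ioo_mem_nhdsGT_of_mem ⟨le_rfl, lt_min hδ one_pos⟩) (fun r hr => hr)
  obtain ⟨r, hq, hr⟩ := (hfreq.and_eventually hev).exists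
  obtain ⟨hr0, hrm⟩ := hr
  have hrδ : r ≤ δ := le_of_lt (lt_of_lt_of_le hrm (min_le_left _ _))
  have hr1 : r < 1 := lt_of_lt_of_le hrm (min_le_right _ _)
  set m := (μ (Metric.closedBall x r)).toReal with hm
  have hne : μ (Metric.closedBall x r) ≠ ⊤ := measure_ne_top _ _
  have hm0 : 0 < m := ENNReal.toReal_pos (hpos r hr0) hne
  have hlogr : Real.log r < 0 := Real.log_neg hr0 hr1
  have hs0 : (0 : ℝ≥0∞) < (s : ℝ≥0∞) := lt_of_le_of_lt zero_le hq
  have hs0' : 0 < (s : ℝ) := by exact_mod_cast hs0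
  rw [← ENNReal.ofReal_coe_nnreal] at hq
  have hq' : Real.log m / Real.log r < (s : ℝ) := (ENNReal.ofReal_lt_ofReal_iff hs0').mp hq
  have hlog : (s : ℝ) * Real.log r < Real.log m := (div_lt_iff_of_neg hlogr).mp hq'
  rw [← Real.log_rpow hr0] at hlog
  have hrs : r ^ (s : ℝ) < m :=
    (Real.log_lt_log_iff (Real.rpow_pos_of_pos hr0 _) hm0).mp hlog
  refine ⟨r, hr0, hrδ, ?_⟩
  calc ENNReal.ofReal (r ^ (s:ℝ)) < ENNReal.ofReal m := (ENNReal.ofReal_lt_ofReal_iff hm0).mpr hrs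
    _ = μ (Metric.closedBall x r) := ENNReal.ofReal_toReal hne

lemma dimH_le_aux (μ : Measure X) [IsProbabilityMeasure μ] {A : Set X} {s : ℝ≥0}
    (hA : ∀ x ∈ A, (∀ r : ℝ, 0 < r → μ (Metric.closedBall x r) ≠ 0) ∧
      lowerLocalDim μ x < s) : dimH A ≤ s := by
  rcases A.eq_empty_or_nonempty with rfl | ⟨x₀, hx₀⟩
  · simp
  have hs0 : (0 : ℝ≥0∞) < (s : ℝ≥0∞) := lt_of_le_of_lt zero_le (hA x₀ hx₀).2
  have hs0' : 0 < (s : ℝ) := by exact_mod_cast hs0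
  -- Vitali families at scale 1/(n+1)
  have key : ∀ n : ℕ, ∃ u : Set (X × ℝ),
      (∀ p ∈ u, p.1 ∈ A ∧ 0 < p.2 ∧ p.2 ≤ 1/((n:ℝ)+1) ∧
        ENNReal.ofReal (p.2 ^ (s:ℝ)) < μ (Metric.closedBall p.1 p.2)) ∧
      u.PairwiseDisjoint (fun p => Metric.closedBall p.1 p.2) ∧
      A ⊆ ⋃ p ∈ u, Metric.closedBall p.1 (4 * p.2) := by
    intro n
    set T : Set (X × ℝ) := {p | p.1 ∈ A ∧ 0 < p.2 ∧ p.2 ≤ 1/((n:ℝ)+1) ∧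
      ENNReal.ofReal (p.2 ^ (s:ℝ)) < μ (Metric.closedBall p.1 p.2)} with hT
    obtain ⟨u, huT, hdisj, hcov⟩ :=
      Vitali.exists_disjoint_subfamily_covering_enlargement_closedBall T Prod.fst Prod.snd
        (1/((n:ℝ)+1)) (fun p hp => hp.2.2.1) 4 (by norm_num)
    refine ⟨u, fun p hp => huT hp, hdisj, ?_⟩
    intro x hx
    obtain ⟨r, hr0, hrδ, hrμ⟩ := exists_small_ball μ (hA x hx).1 (hA x hx).2
      (δ := 1/((n:ℝ)+1)) (by positivity)
    obtain ⟨b, hbu, hsub⟩ := hcov (x, r) ⟨hx, hr0, hrδ, hrμ⟩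
    exact Set.mem_biUnion hbu (hsub (Metric.mem_closedBall_self hr0.le))
  choose u hu hdisj hcov using key
  have hpd : ∀ n, Pairwise (Function.onFun Disjoint fun b : ↥(u n) =>
      Metric.closedBall b.1.1 b.1.2) := by
    intro n i j hij
    exact hdisj n i.2 j.2 (fun h => hij (Subtype.ext h))
  haveI hcnt : ∀ n : ℕ, Countable ↥(u n) := by
    intro n
    have hc := Measure.countable_meas_pos_of_disjoint_iUnion (μ := μ)
      (As := fun b : ↥(u n) => Metric.closedBall b.1.1 b.1.2)
      (fun _ => measurableSet_closedBall) (hpd n)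
    have heq : {b : ↥(u n) | 0 < μ (Metric.closedBall b.1.1 b.1.2)} = Set.univ := by
      refine Set.eq_univ_of_forall fun b => ?_
      exact lt_of_le_of_lt zero_le (hu n b.1 b.2).2.2.2
    rw [heq] at hc
    exact Set.countable_univ_iff.mp hc
  -- bound the Hausdorff measure
  have hmain : μH[(s:ℝ)] A ≤ ENNReal.ofReal (8 ^ (s:ℝ)) := by
    have hr0 : Tendsto (fun n : ℕ => ENNReal.ofReal (8/((n:ℝ)+1))) atTop (𝓝 0) := by
      rw [← ENNReal.ofReal_zero]
      apply ENNReal.tendsto_ofReal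
      exact Tendsto.div_atTop tendsto_const_nhds
        (tendsto_atTop_add_const_right _ 1 tendsto_natCast_atTop_atTop)
    have hbound := Measure.hausdorffMeasure_le_liminf_tsum (s:ℝ) A
      (fun n : ℕ => ENNReal.ofReal (8/((n:ℝ)+1))) hr0
      (fun n (b : ↥(u n)) => Metric.closedBall b.1.1 (4 * b.1.2)) ?_ ?_
    · refine hbound.trans ?_
      have hterm : ∀ n : ℕ, (∑' b : ↥(u n),
          EMetric.diam (Metric.closedBall b.1.1 (4 * b.1.2)) ^ (s:ℝ)) ≤
          ENNReal.ofReal (8 ^ (s:ℝ)) := by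
        intro n
        have h1 : ∀ b : ↥(u n),
            EMetric.diam (Metric.closedBall b.1.1 (4 * b.1.2)) ^ (s:ℝ) ≤
            ENNReal.ofReal (8 ^ (s:ℝ)) * μ (Metric.closedBall b.1.1 b.1.2) := by
          intro b
          obtain ⟨-, hbr0, -, hbμ⟩ := hu n b.1 b.2
          have hdiam : EMetric.diam (Metric.closedBall b.1.1 (4 * b.1.2)) ≤
              ENNReal.ofReal (8 * b.1.2) := by
            apply Metric.ediam_le_of_forall_dist_le
            intro y hy z hz
            have h1 := Metric.mem_closedBall.mp hy
            have h2 := Metric.mem_closedBall.mp hz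
            calc dist y z ≤ dist y b.1.1 + dist b.1.1 z := dist_triangle _ _ _
              _ ≤ 4 * b.1.2 + 4 * b.1.2 := by
                  rw [dist_comm b.1.1 z]; exact add_le_add h1 h2
              _ = 8 * b.1.2 := by ring
          calc EMetric.diam (Metric.closedBall b.1.1 (4 * b.1.2)) ^ (s:ℝ)
              ≤ (ENNReal.ofReal (8 * b.1.2)) ^ (s:ℝ) :=
                ENNReal.rpow_le_rpow hdiam hs0'.le
            _ = ENNReal.ofReal ((8 * b.1.2) ^ (s:ℝ)) :=
                ENNReal.ofReal_rpow_of_pos (by linarith)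
            _ = ENNReal.ofReal (8 ^ (s:ℝ) * b.1.2 ^ (s:ℝ)) := by
                rw [Real.mul_rpow (by norm_num) hbr0.le]
            _ = ENNReal.ofReal (8 ^ (s:ℝ)) * ENNReal.ofReal (b.1.2 ^ (s:ℝ)) :=
                ENNReal.ofReal_mul (by positivity)
            _ ≤ ENNReal.ofReal (8 ^ (s:ℝ)) * μ (Metric.closedBall b.1.1 b.1.2) := by
                exact mul_le_mul_right hbμ.le _
        calc (∑' b : ↥(u n), EMetric.diam (Metric.closedBall b.1.1 (4 * b.1.2)) ^ (s:ℝ))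
            ≤ ∑' b : ↥(u n), ENNReal.ofReal (8 ^ (s:ℝ)) * μ (Metric.closedBall b.1.1 b.1.2) :=
              ENNReal.tsum_le_tsum h1
          _ = ENNReal.ofReal (8 ^ (s:ℝ)) * ∑' b : ↥(u n), μ (Metric.closedBall b.1.1 b.1.2) :=
              ENNReal.tsum_mul_left
          _ = ENNReal.ofReal (8 ^ (s:ℝ)) *
              μ (⋃ b : ↥(u n), Metric.closedBall b.1.1 b.1.2) := by
              rw [measure_iUnion (hpd n) (fun _ => measurableSet_closedBall)]
          _ ≤ ENNReal.ofReal (8 ^ (s:ℝ)) * 1 := by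
              exact mul_le_mul_right prob_le_one _
          _ = ENNReal.ofReal (8 ^ (s:ℝ)) := mul_one _
      calc liminf (fun n : ℕ => ∑' b : ↥(u n),
            EMetric.diam (Metric.closedBall b.1.1 (4 * b.1.2)) ^ (s:ℝ)) atTop
          ≤ liminf (fun _ : ℕ => ENNReal.ofReal (8 ^ (s:ℝ))) atTop :=
            liminf_le_liminf (Eventually.of_forall hterm)
        _ = ENNReal.ofReal (8 ^ (s:ℝ)) := liminf_const _
    · refine Eventually.of_forall fun n => fun b => ?_
      have hb := hu n b.1 b.2
      have hdiam : EMetric.diam (Metric.closedBall b.1.1 (4 * b.1.2)) ≤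
          ENNReal.ofReal (8 * b.1.2) := by
        apply Metric.ediam_le_of_forall_dist_le
        intro y hy z hz
        have h1 := Metric.mem_closedBall.mp hy
        have h2 := Metric.mem_closedBall.mp hz
        calc dist y z ≤ dist y b.1.1 + dist b.1.1 z := dist_triangle _ _ _
          _ ≤ 4 * b.1.2 + 4 * b.1.2 := by
              rw [dist_comm b.1.1 z]; exact add_le_add h1 h2
          _ = 8 * b.1.2 := by ring
      refine hdiam.trans (ENNReal.ofReal_le_ofReal ?_)
      have hle := hb.2.2.1
      rw [div_eq_mul_one_div (8:ℝ)]
      linarith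
    · refine Eventually.of_forall fun n => ?_
      have := hcov n
      rwa [Set.biUnion_eq_iUnion] at this
  have hne : μH[((s : ℝ≥0) : ℝ)] A ≠ ⊤ := (hmain.trans_lt ENNReal.ofReal_lt_top).ne
  exact dimH_le_of_hausdorffMeasure_ne_top hne

lemma lower_aux (μ : Measure X) {F : Set X} (hF : MeasurableSet F) {s : ℝ≥0} (hs : 0 < s)
    {δ : ℝ} (hδ : 0 < δ)
    (hball : ∀ x ∈ F, ∀ r : ℝ, 0 < r → r < δ →
      μ (Metric.closedBall x r) ≤ ENNReal.ofReal (r ^ (s:ℝ))) :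
    μ F ≤ μH[(s:ℝ)] F := by
  have hs' : 0 < (s : ℝ) := hs
  have hres : μ.restrict F ≤ μH[(s:ℝ)] := by
    apply MeasureTheory.Measure.le_hausdorffMeasure _ _ (ENNReal.ofReal (δ/2))
      (by simp [ENNReal.ofReal_pos]; positivity)
    intro t ht
    rw [Measure.restrict_apply' hF]
    rcases (t ∩ F).eq_empty_or_nonempty with h | ⟨x, hxt, hxF⟩
    · simp [h]
    by_cases hd : EMetric.diam t = 0
    · have hsub : t ∩ F ⊆ {x} := by
        intro y hy
        exact (EMetric.diam_eq_zero_iff.mp hd hy.1 hxt : y = x)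
      have hx0 : μ {x} = 0 := by
        have htt : Tendsto (fun r : ℝ => ENNReal.ofReal (r ^ (s:ℝ))) (𝓝[>] 0) (𝓝 0) := by
          have hc : Tendsto (fun r : ℝ => r ^ (s:ℝ)) (𝓝 0) (𝓝 0) := by
            have := (Real.continuousAt_rpow_const 0 (s:ℝ) (Or.inr hs'.le)).tendsto
            rwa [Real.zero_rpow hs'.ne'] at this
          rw [← ENNReal.ofReal_zero]
          exact (ENNReal.tendsto_ofReal (hc.mono_left nhdsWithin_le_nhds))
        have hev : ∀ᶠ r in 𝓝[>] (0:ℝ), μ {x} ≤ ENNReal.ofReal (r ^ (s:ℝ)) := by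
          refine eventually_of_mem (Ioo_mem_nhdsGT_of_mem ⟨le_rfl, hδ⟩) fun r hr => ?_
          exact le_trans (measure_mono (by simp [Metric.mem_closedBall, hr.1.le]))
            (hball x hxF r hr.1 hr.2)
        exact le_antisymm (ge_of_tendsto htt hev) zero_le
      exact le_trans (le_trans (measure_mono hsub) hx0.le) zero_le
    · have hdne : EMetric.diam t ≠ ⊤ := (lt_of_le_of_lt ht ENNReal.ofReal_lt_top).ne
      set r := (EMetric.diam t).toReal with hrdef
      have hr0 : 0 < r := ENNReal.toReal_pos hd hdne
      have hrδ : r < δ := by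
        have := ENNReal.toReal_mono ENNReal.ofReal_ne_top ht
        rw [ENNReal.toReal_ofReal (by positivity)] at this
        have h' : r ≤ δ / 2 := this
        linarith
      have hsub : t ∩ F ⊆ Metric.closedBall x r := by
        intro y hy
        have h1 : edist y x ≤ EMetric.diam t := EMetric.edist_le_diam_of_mem hy.1 hxt
        rw [Metric.mem_closedBall, dist_edist]
        exact ENNReal.toReal_mono hdne h1
      calc μ (t ∩ F) ≤ μ (Metric.closedBall x r) := measure_mono hsub
        _ ≤ ENNReal.ofReal (r ^ (s:ℝ)) := hball x hxF r hr0 hrδ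
        _ = (ENNReal.ofReal r) ^ (s:ℝ) := (ENNReal.ofReal_rpow_of_pos hr0).symm
        _ = EMetric.diam t ^ (s:ℝ) := by rw [ENNReal.ofReal_toReal hdne]
  have := Measure.le_iff.mp hres F hF
  rwa [Measure.restrict_apply' hF, Set.inter_self] at this

/-- `dim^* μ` equals the `μ`-essential supremum of the lower local dimension. -/
theorem stmt_10 (μ : Measure X) [IsProbabilityMeasure μ] :
    upperDim μ = essSup (lowerLocalDim μ) μ := by
  set f := lowerLocalDim μ with hf
  set α := essSup f μ with hα
  apply le_antisymm
  · -- upperDim ≤ α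
    set U : Set X := {x | ∃ r : ℝ, 0 < r ∧ μ (Metric.closedBall x r) = 0} with hU
    have hUopen : IsOpen U := by
      rw [Metric.isOpen_iff]
      rintro x ⟨r, hr0, hrμ⟩
      refine ⟨r/2, by positivity, fun y hy => ?_⟩
      refine ⟨r/2, by positivity, ?_⟩
      have : Metric.closedBall y (r/2) ⊆ Metric.closedBall x r := by
        apply Metric.closedBall_subset_closedBall'
        have := Metric.mem_ball.mp hy
        linarith
      exact le_antisymm (le_trans (measure_mono this) hrμ.le) zero_le
    have hUnull : μ U = 0 := by
      apply measure_null_of_locally_null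
      rintro x ⟨r, hr0, hrμ⟩
      exact ⟨Metric.closedBall x r,
        mem_nhdsWithin_of_mem_nhds (Metric.closedBall_mem_nhds x hr0), hrμ⟩
    have hnull : μ {x | α < f x} = 0 := by
      have := ENNReal.ae_le_essSup f (μ := μ)
      rw [ae_iff] at this
      simpa only [not_le] using this
    obtain ⟨N, hNsup, hNmeas, hNnull⟩ := exists_measurable_superset_of_null hnull
    set A := (U ∪ N)ᶜ with hA
    have hAm : MeasurableSet A := (hUopen.measurableSet.union hNmeas).compl
    have hAc : μ Aᶜ = 0 := by
      rw [hA, compl_compl]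
      exact measure_union_null hUnull hNnull
    have h1 : upperDim μ ≤ dimH A :=
      iInf_le_of_le A (iInf_le_of_le hAm (iInf_le _ hAc))
    refine h1.trans ?_
    by_contra hlt
    push_neg at hlt
    obtain ⟨s, hαs, hsdim⟩ := ENNReal.lt_iff_exists_nnreal_btwn.mp hlt
    have hle : dimH A ≤ s := by
      apply dimH_le_aux μ
      intro x hx
      rw [hA, Set.mem_compl_iff, Set.mem_union] at hx
      push_neg at hx
      constructor
      · intro r hr0 hrμ
        exact hx.1 ⟨r, hr0, hrμ⟩
      · have hxN : x ∉ N := hx.2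
        have : ¬ α < f x := fun h => hxN (hNsup h)
        push_neg at this
        exact lt_of_le_of_lt this hαs
    exact absurd (hsdim.trans_le hle) (lt_irrefl _)
  · -- α ≤ upperDim
    rw [upperDim]
    refine le_iInf fun A => le_iInf fun hAm => le_iInf fun hAc => ?_
    by_contra hlt
    push_neg at hlt
    obtain ⟨s, hds, hsα⟩ := ENNReal.lt_iff_exists_nnreal_btwn.mp hlt
    have hs0 : 0 < s := by
      have : (0 : ℝ≥0∞) < (s : ℝ≥0∞) := lt_of_le_of_lt zero_le hds
      exact_mod_cast this
    have hs0' : 0 < (s : ℝ) := hs0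
    set E : ℕ → Set X := fun n => {x | ∀ r : ℝ, 0 < r → r < 1/((n:ℝ)+1) →
      μ (Metric.closedBall x r) ≤ ENNReal.ofReal (r ^ (s:ℝ))} with hE
    have hEclosed : ∀ n, IsClosed (E n) := by
      intro n
      apply isClosed_of_closure_subset
      intro x hx r hr0 hrlt
      have key : ∀ r' : ℝ, r < r' → r' < 1/((n:ℝ)+1) →
          μ (Metric.closedBall x r) ≤ ENNReal.ofReal (r' ^ (s:ℝ)) := by
        intro r' h1 h2
        obtain ⟨y, hyE, hyd⟩ := Metric.mem_closure_iff.mp hx (r' - r) (by linarith)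
        have hsub : Metric.closedBall x r ⊆ Metric.closedBall y r' := by
          apply Metric.closedBall_subset_closedBall'
          linarith
        exact le_trans (measure_mono hsub) (hyE r' (lt_trans hr0 h1) h2)
      have htt : Tendsto (fun r' : ℝ => ENNReal.ofReal (r' ^ (s:ℝ))) (𝓝[>] r)
          (𝓝 (ENNReal.ofReal (r ^ (s:ℝ)))) := by
        have hc : Tendsto (fun r' : ℝ => r' ^ (s:ℝ)) (𝓝 r) (𝓝 (r ^ (s:ℝ))) :=
          (Real.continuousAt_rpow_const r (s:ℝ) (Or.inl hr0.ne')).tendsto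
        exact (ENNReal.tendsto_ofReal hc).mono_left nhdsWithin_le_nhds
      have hev : ∀ᶠ r' in 𝓝[>] r, μ (Metric.closedBall x r) ≤ ENNReal.ofReal (r' ^ (s:ℝ)) :=
        eventually_of_mem (Ioo_mem_nhdsGT_of_mem ⟨le_rfl, hrlt⟩)
          (fun r' hr' => key r' hr'.1 hr'.2)
      exact ge_of_tendsto htt hev
    have hsubE : {x | (s : ℝ≥0∞) < f x} ⊆ ⋃ n, E n := by
      intro x hx
      have hev : ∀ᶠ r : ℝ in 𝓝[>] 0, (s : ℝ≥0∞) <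
          ENNReal.ofReal (Real.log (μ (Metric.closedBall x r)).toReal / Real.log r) :=
        eventually_lt_of_lt_liminf hx
      obtain ⟨ε, hε, hIoo⟩ := mem_nhdsGT_iff_exists_Ioo_subset.mp hev
      obtain ⟨n, hn⟩ := exists_nat_one_div_lt (lt_min hε one_pos : (0:ℝ) < min ε 1)
      refine Set.mem_iUnion.mpr ⟨n, ?_⟩
      intro r hr0 hrlt
      have hrε : r < ε := lt_of_lt_of_le (lt_trans hrlt (lt_of_lt_of_le hn (min_le_left _ _)))
        le_rfl
      have hr1 : r < 1 := lt_trans hrlt (lt_of_lt_of_le hn (min_le_right _ _))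
      have hP : (s : ℝ≥0∞) <
          ENNReal.ofReal (Real.log (μ (Metric.closedBall x r)).toReal / Real.log r) :=
        hIoo ⟨hr0, hrε⟩
      by_cases hμ0 : μ (Metric.closedBall x r) = 0
      · rw [hμ0]; exact zero_le
      set m := (μ (Metric.closedBall x r)).toReal with hm
      have hne : μ (Metric.closedBall x r) ≠ ⊤ := measure_ne_top _ _
      have hm0 : 0 < m := ENNReal.toReal_pos hμ0 hne
      have hlogr : Real.log r < 0 := Real.log_neg hr0 hr1
      rw [← ENNReal.ofReal_coe_nnreal] at hP
      have hq : (s : ℝ) < Real.log m / Real.log r := by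
        by_contra hcon
        push_neg at hcon
        exact absurd (ENNReal.ofReal_le_ofReal hcon) (not_le.mpr hP)
      have hlog : Real.log m < (s : ℝ) * Real.log r := (lt_div_iff_of_neg hlogr).mp hq
      rw [← Real.log_rpow hr0] at hlog
      have hrs : m < r ^ (s:ℝ) :=
        (Real.log_lt_log_iff hm0 (Real.rpow_pos_of_pos hr0 _)).mp hlog
      calc μ (Metric.closedBall x r) = ENNReal.ofReal m := (ENNReal.ofReal_toReal hne).symm
        _ ≤ ENNReal.ofReal (r ^ (s:ℝ)) := ENNReal.ofReal_le_ofReal hrs.le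
    have hpos : 0 < μ {x | (s : ℝ≥0∞) < f x} := by
      rcases eq_or_lt_of_le (zero_le : (0:ℝ≥0∞) ≤ μ {x | (s : ℝ≥0∞) < f x}) with h | h
      · exfalso
        have hae : f ≤ᵐ[μ] fun _ => (s : ℝ≥0∞) := by
          rw [EventuallyLE, ae_iff]
          simpa only [not_le] using h.symm
        have : α ≤ (s : ℝ≥0∞) := essSup_le_of_ae_le _ hae
        exact absurd (this.trans_lt hsα) (lt_irrefl _)
      · exact h
    obtain ⟨n, hEn⟩ : ∃ n, 0 < μ (E n) := by
      by_contra hcon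
      push_neg at hcon
      have : μ (⋃ n, E n) = 0 :=
        measure_iUnion_null (fun n => le_antisymm (hcon n) zero_le)
      exact absurd (lt_of_lt_of_le hpos (le_trans (measure_mono hsubE) this.le))
        (lt_irrefl _)
    set F := A ∩ E n with hF
    have hFm : MeasurableSet F := hAm.inter (hEclosed n).measurableSet
    have hFpos : 0 < μ F := by
      have h1 : μ (E n) ≤ μ (E n ∩ A) + μ (E n \ A) := measure_le_inter_add_diff μ _ _
      have h2 : μ (E n \ A) = 0 :=
        le_antisymm (le_trans (measure_mono (Set.diff_subset_compl _ _)) hAc.le) zero_le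
      rw [h2, add_zero, Set.inter_comm] at h1
      exact lt_of_lt_of_le hEn h1
    have hball : ∀ x ∈ F, ∀ r : ℝ, 0 < r → r < 1/((n:ℝ)+1) →
        μ (Metric.closedBall x r) ≤ ENNReal.ofReal (r ^ (s:ℝ)) :=
      fun x hx r h1 h2 => hx.2 r h1 h2
    have hmass := lower_aux μ hFm hs0 (δ := 1/((n:ℝ)+1)) (by positivity) hball
    have hAne : μH[((s:ℝ≥0):ℝ)] A ≠ 0 := by
      refine ne_of_gt (lt_of_lt_of_le (lt_of_lt_of_le hFpos hmass) ?_)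
      exact measure_mono Set.inter_subset_left
    have hsdim : (s : ℝ≥0∞) ≤ dimH A := le_dimH_of_hausdorffMeasure_ne_zero hAne
    exact absurd (hds.trans_le hsdim) (lt_irrefl _)
end

section
/- The Bessel-type integral satisfies (1/2π) ∫_0^{2π} e^{r cos x} dx = Σ_{n=0}^∞ r^{2n} / ((n!)² 2^{2n}) for all real r. -/
open scoped Real
open MeasureTheory intervalIntegral Real

lemma cos_pow_odd_int (n : ℕ) :
    ∫ x in (0:ℝ)..(2*π), Real.cos x ^ (2*n+1) = 0 := by
  induction n with
  | zero => simp [Real.sin_two_pi]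
  | succ k ih =>
      have : 2*(k+1)+1 = (2*k+1)+2 := by ring
      rw [this, integral_cos_pow]
      simp [Real.sin_two_pi, ih]

lemma cos_pow_even_int (n : ℕ) :
    ∫ x in (0:ℝ)..(2*π), Real.cos x ^ (2*n)
      = 2*π * (2*n).factorial / (4^n * (n.factorial:ℝ)^2) := by
  induction n with
  | zero => simp
  | succ k ih =>
      have h : 2*(k+1) = (2*k)+2 := by ring
      rw [h, integral_cos_pow]
      rw [ih]
      simp only [Real.sin_two_pi, Real.sin_zero]
      have h1 : ((2*k+2).factorial : ℝ) = (2*k+2) * (2*k+1) * (2*k).factorial := by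
        have : 2*k+2 = (2*k+1)+1 := by ring
        rw [this, Nat.factorial_succ]
        push_cast [Nat.factorial_succ]
        ring
      have h2 : ((k+1).factorial : ℝ) = (k+1) * k.factorial := by
        push_cast [Nat.factorial_succ]; ring
      have hk : ((2:ℝ)*k+2) ≠ 0 := by positivity
      have hkf : (k.factorial : ℝ) ≠ 0 := Nat.cast_ne_zero.2 k.factorial_ne_zero
      have h4 : (4:ℝ)^k ≠ 0 := by positivity
      rw [h1, h2]
      push_cast
      field_simp
      ring

/-- Power series expansion of the Bessel-type integral:
`(1/2π) ∫₀^{2π} e^{r cos x} dx = Σ_{n≥0} r^{2n} / ((n!)² 2^{2n})` for all real `r`. -/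
theorem stmt_16 (r : ℝ) :
    (1 / (2 * π)) * ∫ x in (0 : ℝ)..(2 * π), Real.exp (r * Real.cos x) =
      ∑' n : ℕ, r ^ (2 * n) / ((n.factorial : ℝ) ^ 2 * 2 ^ (2 * n)) := by
  have hπ : (0:ℝ) < 2*π := by positivity
  have hle : (0:ℝ) ≤ 2*π := hπ.le
  set F : ℕ → ℝ → ℝ := fun k x => (r * Real.cos x)^k / k.factorial with hF
  have hexp : ∀ x : ℝ, Real.exp (r * Real.cos x) = ∑' k : ℕ, F k x := by
    intro x
    rw [Real.exp_eq_exp_ℝ, NormedSpace.exp_eq_tsum_div]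
  have hcont : ∀ k, Continuous (F k) := by
    intro k; fun_prop
  have hint : ∀ k, IntegrableOn (F k) (Set.Ioc (0:ℝ) (2*π)) := fun k =>
    (hcont k).integrableOn_Ioc
  have hswap : ∑' k : ℕ, (∫ x in Set.Ioc (0:ℝ) (2*π), F k x)
      = ∫ x in Set.Ioc (0:ℝ) (2*π), (∑' k : ℕ, F k x) := by
    apply MeasureTheory.integral_tsum_of_summable_integral_norm hint
    have hbase : Summable (fun k : ℕ => 2*π * (|r|^k / k.factorial)) :=
      (Real.summable_pow_div_factorial |r|).mul_left (2*π)
    apply Summable.of_nonneg_of_le (fun k => ?_) (fun k => ?_) hbase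
    · exact MeasureTheory.integral_nonneg (fun x => norm_nonneg _)
    · have hb : ∀ x ∈ Set.Ioc (0:ℝ) (2*π), ‖F k x‖ ≤ |r|^k / k.factorial := by
        intro x _
        have h1 : |r * Real.cos x| ≤ |r| := by
          rw [abs_mul]
          exact mul_le_of_le_one_right (abs_nonneg r) (Real.abs_cos_le_one x)
        simp only [hF, Real.norm_eq_abs, abs_div, abs_pow, Nat.abs_cast]
        gcongr
      calc ∫ x in Set.Ioc (0:ℝ) (2*π), ‖F k x‖
          ≤ ∫ _x in Set.Ioc (0:ℝ) (2*π), (|r|^k / k.factorial) := by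
            apply MeasureTheory.setIntegral_mono_on (hint k).norm
              (integrableOn_const (by rw [Real.volume_Ioc]; exact ENNReal.ofReal_ne_top))
              measurableSet_Ioc hb
        _ = 2*π * (|r|^k / k.factorial) := by
            rw [MeasureTheory.setIntegral_const, MeasureTheory.measureReal_def, Real.volume_Ioc, sub_zero,
              ENNReal.toReal_ofReal hle, smul_eq_mul]
  have hval : ∀ k : ℕ, (∫ x in Set.Ioc (0:ℝ) (2*π), F k x)
      = r^k / k.factorial * ∫ x in (0:ℝ)..(2*π), Real.cos x ^ k := by
    intro k
    rw [← intervalIntegral.integral_of_le hle, ← intervalIntegral.integral_const_mul]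
    congr 1 with x
    simp only [hF, mul_pow]
    ring
  set g : ℕ → ℝ := fun k => r^k / k.factorial * ∫ x in (0:ℝ)..(2*π), Real.cos x ^ k with hg
  have hI : (∫ x in (0:ℝ)..(2*π), Real.exp (r * Real.cos x)) = ∑' k : ℕ, g k := by
    rw [intervalIntegral.integral_of_le hle]
    rw [MeasureTheory.setIntegral_congr_fun measurableSet_Ioc
      (fun x _ => hexp x)]
    rw [← hswap]
    exact tsum_congr fun k => hval k
  have heven : ∑' n : ℕ, g (2*n) = ∑' k : ℕ, g k := by
    apply Function.Injective.tsum_eq (fun a b h => by omega)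
    intro k hk
    rcases Nat.even_or_odd k with ⟨m, hm⟩ | ⟨m, hm⟩
    · exact ⟨m, by omega⟩
    · exfalso
      apply hk
      simp only [hg, hm, cos_pow_odd_int m, mul_zero]
  rw [hI, ← heven, ← tsum_mul_left]
  apply tsum_congr
  intro n
  have hfac : ((2*n).factorial : ℝ) ≠ 0 := Nat.cast_ne_zero.2 (2*n).factorial_ne_zero
  have hnf : (n.factorial : ℝ) ≠ 0 := Nat.cast_ne_zero.2 n.factorial_ne_zero
  have hπ' : π ≠ 0 := Real.pi_ne_zero
  simp only [hg, cos_pow_even_int n]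
  have h4 : (2:ℝ)^(2*n) = 4^n := by
    rw [pow_mul]; norm_num
  rw [h4]
  field_simp
end

section
/- The function P(s,t) = log[(1/2π) ∫_0^{2π} e^{√(s²+t²) cos x} dx] is well-defined, convex on ℝ², and satisfies P(0,0) = 0. -/
open scoped Real ENNReal NNReal
open MeasureTheory Set intervalIntegral

noncomputable def Iint (r : ℝ) : ℝ := ∫ x in (0:ℝ)..(2*π), Real.exp (r * Real.cos x)

lemma cont17 (r : ℝ) : Continuous (fun x => Real.exp (r * Real.cos x)) := by fun_prop

lemma intInt17 (r a b : ℝ) :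
    IntervalIntegrable (fun x => Real.exp (r * Real.cos x)) volume a b :=
  (cont17 r).intervalIntegrable a b

lemma Ipos17 (r : ℝ) : 0 < Iint r :=
  intervalIntegral_pos_of_pos (intInt17 r 0 (2*π)) (fun x => Real.exp_pos _) (by positivity)

lemma memLp17 (r : ℝ) (p : ℝ≥0∞) :
    MemLp (fun x => Real.exp (r * Real.cos x)) p (volume.restrict (Ioc (0:ℝ) (2*π))) := by
  have hfin : IsFiniteMeasure (volume.restrict (Ioc (0:ℝ) (2*π))) := by
    constructor
    rw [Measure.restrict_apply_univ, Real.volume_Ioc]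
    exact ENNReal.ofReal_lt_top
  have htop : MemLp (fun x => Real.exp (r * Real.cos x)) ⊤
      (volume.restrict (Ioc (0:ℝ) (2*π))) := by
    refine memLp_top_of_bound (cont17 r).aestronglyMeasurable (Real.exp |r|) ?_
    filter_upwards with x
    rw [Real.norm_eq_abs, Real.abs_exp]
    refine Real.exp_le_exp.2 ((le_abs_self _).trans ?_)
    rw [abs_mul]
    exact mul_le_of_le_one_right (abs_nonneg _) (Real.abs_cos_le_one x)
  exact htop.mono_exponent le_top

lemma Isymm17 (r : ℝ) : Iint r = Iint (-r) := by
  have per : Function.Periodic (fun x => Real.exp (r * Real.cos x)) (2*π) := fun x => by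
    simp [Real.cos_add_two_pi]
  have h1 : Iint r = ∫ x in π..(π + 2*π), Real.exp (r * Real.cos x) := by
    have := per.intervalIntegral_add_eq 0 π
    simpa [Iint] using this
  have h2 : (∫ x in (0:ℝ)..(2*π), Real.exp (r * Real.cos (x + π)))
      = ∫ x in (0+π)..(2*π+π), Real.exp (r * Real.cos x) :=
    intervalIntegral.integral_comp_add_right (fun x => Real.exp (r * Real.cos x)) π
  have h3 : Iint (-r) = ∫ x in (0:ℝ)..(2*π), Real.exp (r * Real.cos (x + π)) := by
    unfold Iint
    congr 1
    ext x
    rw [Real.cos_add_pi]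
    ring_nf
  rw [h1, h3, h2]
  congr 1
  · ring
  · ring

lemma Imono17 : MonotoneOn Iint (Ici (0:ℝ)) := by
  intro a ha b hb hab
  have key : ∀ r : ℝ, 2 * Iint r
      = ∫ x in (0:ℝ)..(2*π), (Real.exp (r * Real.cos x) + Real.exp ((-r) * Real.cos x)) := by
    intro r
    rw [intervalIntegral.integral_add (intInt17 r 0 (2*π)) (intInt17 (-r) 0 (2*π))]
    rw [show (∫ x in (0:ℝ)..(2*π), Real.exp ((-r) * Real.cos x)) = Iint (-r) from rfl,
      show (∫ x in (0:ℝ)..(2*π), Real.exp (r * Real.cos x)) = Iint r from rfl, ← Isymm17 r]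
    ring
  have hmain : 2 * Iint a ≤ 2 * Iint b := by
    rw [key a, key b]
    refine intervalIntegral.integral_mono_on (by positivity)
      ((intInt17 a 0 (2*π)).add (intInt17 (-a) 0 (2*π)))
      ((intInt17 b 0 (2*π)).add (intInt17 (-b) 0 (2*π))) ?_
    intro x _
    have h1 : Real.exp (a * Real.cos x) + Real.exp ((-a) * Real.cos x)
        = 2 * Real.cosh (a * Real.cos x) := by
      rw [Real.cosh_eq]; ring_nf
    have h2 : Real.exp (b * Real.cos x) + Real.exp ((-b) * Real.cos x)
        = 2 * Real.cosh (b * Real.cos x) := by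
      rw [Real.cosh_eq]; ring_nf
    rw [h1, h2]
    have : |a * Real.cos x| ≤ |b * Real.cos x| := by
      rw [abs_mul, abs_mul]
      have ha' : (0:ℝ) ≤ a := ha
      rw [abs_of_nonneg ha', abs_of_nonneg (ha'.trans hab)]
      exact mul_le_mul_of_nonneg_right hab (abs_nonneg _)
    nlinarith [Real.cosh_le_cosh.2 this]
  linarith

lemma logI_convex17 : ConvexOn ℝ univ (fun r => Real.log ((1/(2*π)) * Iint r)) := by
  refine ⟨convex_univ, fun a _ b _ w1 w2 hw1 hw2 hsum => ?_⟩
  rcases eq_or_lt_of_le hw1 with h1 | h1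
  · have hw2' : w2 = 1 := by linarith
    simp [← h1, hw2', smul_eq_mul]
  rcases eq_or_lt_of_le hw2 with h2 | h2
  · have hw1' : w1 = 1 := by linarith
    simp [← h2, hw1', smul_eq_mul]
  have hw1lt : w1 < 1 := by linarith
  set μ := volume.restrict (Ioc (0:ℝ) (2*π)) with hμ
  have hconj : Real.HolderConjugate w1⁻¹ w2⁻¹ :=
    Real.holderConjugate_iff.mpr ⟨by rw [lt_inv_comm₀ one_pos h1]; simpa using hw1lt, by rw [inv_inv, inv_inv]; exact hsum⟩
  have hnn : ∀ c : ℝ, (0:ℝ→ℝ) ≤ᵐ[μ] fun x => Real.exp (c * Real.cos x) :=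
    fun c => Filter.Eventually.of_forall fun x => by simpa using (Real.exp_pos (c * Real.cos x)).le
  have hH := integral_mul_le_Lp_mul_Lq_of_nonneg (μ := μ) hconj
    (f := fun x => Real.exp ((w1*a) * Real.cos x)) (g := fun x => Real.exp ((w2*b) * Real.cos x))
    (hnn _) (hnn _) (memLp17 _ _) (memLp17 _ _)
  -- rewrite LHS
  have hL : (∫ x, Real.exp ((w1*a) * Real.cos x) * Real.exp ((w2*b) * Real.cos x) ∂μ)
      = Iint (w1*a + w2*b) := by
    rw [Iint, intervalIntegral.integral_of_le (by positivity)]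
    congr 1; ext x
    rw [← Real.exp_add]; ring_nf
  -- rewrite each factor on the RHS
  have hR : ∀ (c w : ℝ), 0 < w →
      (∫ x, Real.exp ((w*c) * Real.cos x) ^ w⁻¹ ∂μ) ^ (1 / w⁻¹) = Iint c ^ w := by
    intro c w hw
    have hfx : (fun x => Real.exp ((w*c) * Real.cos x) ^ w⁻¹)
        = fun x => Real.exp (c * Real.cos x) := by
      ext x
      rw [show (w*c) * Real.cos x = (c * Real.cos x) * w by ring, Real.exp_mul,
        ← Real.rpow_mul (Real.exp_nonneg _), mul_inv_cancel₀ hw.ne', Real.rpow_one]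
    rw [hfx, one_div, inv_inv]
    congr 1
    rw [Iint, intervalIntegral.integral_of_le (by positivity)]
  rw [hL, hR a w1 h1, hR b w2 h2] at hH
  -- now conclude with logs
  have hpi : (0:ℝ) < 1/(2*π) := by positivity
  have hIa := Ipos17 a
  have hIb := Ipos17 b
  have hsplit : (1/(2*π)) * (Iint a ^ w1 * Iint b ^ w2)
      = ((1/(2*π)) * Iint a) ^ w1 * ((1/(2*π)) * Iint b) ^ w2 := by
    rw [Real.mul_rpow hpi.le hIa.le, Real.mul_rpow hpi.le hIb.le,
      show (1/(2*π):ℝ) ^ w1 * Iint a ^ w1 * ((1/(2*π):ℝ) ^ w2 * Iint b ^ w2)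
        = ((1/(2*π):ℝ) ^ w1 * (1/(2*π):ℝ) ^ w2) * (Iint a ^ w1 * Iint b ^ w2) by ring,
      ← Real.rpow_add hpi, hsum, Real.rpow_one]
  simp only [smul_eq_mul]
  calc Real.log ((1/(2*π)) * Iint (w1*a + w2*b))
      ≤ Real.log (((1/(2*π)) * Iint a) ^ w1 * ((1/(2*π)) * Iint b) ^ w2) := by
        refine Real.log_le_log (mul_pos hpi (Ipos17 _)) ?_
        rw [← hsplit]
        exact mul_le_mul_of_nonneg_left hH hpi.le
    _ = w1 * Real.log ((1/(2*π)) * Iint a) + w2 * Real.log ((1/(2*π)) * Iint b) := by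
        rw [Real.log_mul (Real.rpow_pos_of_pos (mul_pos hpi hIa) _).ne'
          (Real.rpow_pos_of_pos (mul_pos hpi hIb) _).ne',
          Real.log_rpow (mul_pos hpi hIa), Real.log_rpow (mul_pos hpi hIb)]

lemma gmono17 : MonotoneOn (fun r => Real.log ((1/(2*π)) * Iint r)) (Ici (0:ℝ)) := by
  intro a ha b hb hab
  have hpi : (0:ℝ) < 1/(2*π) := by positivity
  exact Real.log_le_log (mul_pos hpi (Ipos17 _))
    (mul_le_mul_of_nonneg_left (Imono17 ha hb hab) hpi.le)

lemma sqrt_comb17 (p q : ℝ × ℝ) {w1 w2 : ℝ} (h1 : 0 ≤ w1) (h2 : 0 ≤ w2) :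
    Real.sqrt ((w1*p.1+w2*q.1)^2 + (w1*p.2+w2*q.2)^2)
      ≤ w1 * Real.sqrt (p.1^2+p.2^2) + w2 * Real.sqrt (q.1^2+q.2^2) := by
  have key := norm_add_le (w1 • ((p.1:ℂ) + (p.2:ℂ)*Complex.I)) (w2 • ((q.1:ℂ) + (q.2:ℂ)*Complex.I))
  rw [norm_smul, norm_smul] at key
  have hz : w1 • ((p.1:ℂ) + (p.2:ℂ)*Complex.I) + w2 • ((q.1:ℂ) + (q.2:ℂ)*Complex.I)
      = ((w1*p.1+w2*q.1 : ℝ) : ℂ) + ((w1*p.2+w2*q.2 : ℝ) : ℂ)*Complex.I := by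
    simp only [Complex.real_smul]
    push_cast
    ring
  rw [hz, Complex.norm_add_mul_I] at key
  rw [Complex.norm_add_mul_I, Complex.norm_add_mul_I,
    Real.norm_eq_abs, Real.norm_eq_abs, abs_of_nonneg h1, abs_of_nonneg h2] at key
  exact key

/-- The pressure function `P(s,t) = log[(1/2π) ∫₀^{2π} e^{√(s²+t²) cos x} dx]` is
well-defined (the integral is positive), convex on `ℝ²`, and `P(0,0) = 0`. -/
theorem stmt_17 :
    (∀ s t : ℝ,
      0 < (1 / (2 * π)) * ∫ x in (0 : ℝ)..(2 * π), Real.exp (Real.sqrt (s ^ 2 + t ^ 2) * Real.cos x)) ∧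
    ConvexOn ℝ Set.univ (fun p : ℝ × ℝ =>
      Real.log ((1 / (2 * π)) *
        ∫ x in (0 : ℝ)..(2 * π), Real.exp (Real.sqrt (p.1 ^ 2 + p.2 ^ 2) * Real.cos x))) ∧
    Real.log ((1 / (2 * π)) *
        ∫ x in (0 : ℝ)..(2 * π), Real.exp (Real.sqrt ((0:ℝ) ^ 2 + (0:ℝ) ^ 2) * Real.cos x)) = 0 := by
  have hpi : (0:ℝ) < 1/(2*π) := by positivity
  refine ⟨fun s t => mul_pos hpi (Ipos17 _), ?_, ?_⟩
  · refine ⟨convex_univ, fun p _ q _ w1 w2 hw1 hw2 hsum => ?_⟩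
    set N : ℝ × ℝ → ℝ := fun p => Real.sqrt (p.1^2 + p.2^2) with hN
    show Real.log ((1/(2*π)) * Iint (N (w1 • p + w2 • q)))
      ≤ w1 • Real.log ((1/(2*π)) * Iint (N p)) + w2 • Real.log ((1/(2*π)) * Iint (N q))
    have hNineq : N (w1 • p + w2 • q) ≤ w1 * N p + w2 * N q := by
      simpa [hN, Prod.fst_add, Prod.snd_add, Prod.smul_fst, Prod.smul_snd, smul_eq_mul]
        using sqrt_comb17 p q hw1 hw2
    have step1 := gmono17 (Real.sqrt_nonneg _ : N (w1 • p + w2 • q) ∈ Ici (0:ℝ))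
      (show w1 * N p + w2 * N q ∈ Ici (0:ℝ) by
        have := Real.sqrt_nonneg (p.1^2+p.2^2); have := Real.sqrt_nonneg (q.1^2+q.2^2)
        simp only [hN, mem_Ici]; positivity) hNineq
    have step2 := logI_convex17.2 (mem_univ (N p)) (mem_univ (N q)) hw1 hw2 hsum
    simp only [smul_eq_mul] at step2 ⊢
    exact step1.trans step2
  · rw [show Real.sqrt ((0:ℝ)^2 + (0:ℝ)^2) = 0 by simp]
    simp only [zero_mul, Real.exp_zero]
    rw [intervalIntegral.integral_const, sub_zero, smul_eq_mul, mul_one,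
      one_div, inv_mul_cancel₀ (by positivity : (2*π:ℝ) ≠ 0), Real.log_one]
end
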